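/- arXiv:0803.0722 — 7 statements merged into one kernel-verified Lean document; each statement's English description precedes it below -/
import Mathlib

section
/- If (X,Y) is a pair of commuting upper triangular matrices and X or Y commutes with some regular upper triangular matrix, then (X,Y) lies in CT_n^0, the closure of the pairs of commuting regular upper triangular matrices. -/
open Matrix Polynomial

/-- Points of the affine space `T_n × T_n` (resp. `U_n × U_n`), encoded as functions
from (index pairs for X) ⊕ (index pairs for Y) to the field. -/
abbrev Pt (n : ℕ) (K : Type*) := ((Fin n × Fin n) ⊕ (Fin n × Fin n)) → K

/-- The Zariski topology on the affine space of pairs of matrices: generated by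
complements of zero loci of polynomials. -/
noncomputable instance ptTop (n : ℕ) (K : Type*) [CommRing K] : TopologicalSpace (Pt n K) :=
  TopologicalSpace.generateFrom
    { U | ∃ p : MvPolynomial ((Fin n × Fin n) ⊕ (Fin n × Fin n)) K,
        U = {x | MvPolynomial.eval x p ≠ 0} }

/-- The first matrix of the pair encoded by a point. -/
def Xof {n : ℕ} {K : Type*} (x : Pt n K) : Matrix (Fin n) (Fin n) K :=
  Matrix.of fun i j => x (Sum.inl (i, j))

/-- The second matrix of the pair encoded by a point. -/
def Yof {n : ℕ} {K : Type*} (x : Pt n K) : Matrix (Fin n) (Fin n) K :=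
  Matrix.of fun i j => x (Sum.inr (i, j))

/-- `CT_n`: pairs of commuting upper triangular matrices. -/
def CTset (n : ℕ) (K : Type*) [CommRing K] : Set (Pt n K) :=
  {x | (∀ i j, j < i → Xof x i j = 0) ∧ (∀ i j, j < i → Yof x i j = 0) ∧
    Xof x * Yof x = Yof x * Xof x}

/-- `NT_n`: pairs of commuting strictly upper triangular matrices. -/
def NTset (n : ℕ) (K : Type*) [CommRing K] : Set (Pt n K) :=
  {x | (∀ i j, j ≤ i → Xof x i j = 0) ∧ (∀ i j, j ≤ i → Yof x i j = 0) ∧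
    Xof x * Yof x = Yof x * Xof x}

/-- `CT_n^0`: the Zariski closure of the set of commuting pairs of regular
(minimal polynomial of degree `n`) upper triangular matrices. -/
def CT0 (n : ℕ) (K : Type*) [Field K] : Set (Pt n K) :=
  closure {x | x ∈ CTset n K ∧ (minpoly K (Xof x)).natDegree = n ∧
    (minpoly K (Yof x)).natDegree = n}

section Aux
variable {K : Type*} [Field K] {n : ℕ}


/-- uncurrying matrices as a linear map -/
def uncurM (n : ℕ) (K : Type*) [Field K] :
    Matrix (Fin n) (Fin n) K →ₗ[K] ((Fin n × Fin n) → K) where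
  toFun A := fun p => A p.1 p.2
  map_add' _ _ := rfl
  map_smul' _ _ := rfl

lemma uncurM_inj : Function.Injective (uncurM n K) := by
  intro A B h
  ext i j
  exact congrFun h (i, j)

/-- regular → powers linearly independent (uncurried) -/
lemma regular_iff_li {A : Matrix (Fin n) (Fin n) K} :
    (minpoly K A).natDegree = n ↔
      LinearIndependent K (fun k : Fin n => (uncurM n K) (A ^ (k : ℕ))) := by
  rcases Nat.eq_zero_or_pos n with hn | hn
  · subst hn
    constructor
    · intro _
      exact linearIndependent_empty_type
    · intro _
      have : Subsingleton (Matrix (Fin 0) (Fin 0) K) := by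
        constructor; intro a b; ext i j; exact absurd i.2 (Nat.not_lt_zero _)
      rw [minpoly.subsingleton]
      simp
  · haveI : Nonempty (Fin n) := ⟨⟨0, hn⟩⟩
    constructor
    · intro hdeg
      rw [Fintype.linearIndependent_iff]
      intro g hg
      -- build polynomial q
      set q : K[X] := ∑ i : Fin n, C (g i) * X ^ (i : ℕ) with hq
      have haq : aeval A q = 0 := by
        have : aeval A q = ∑ i : Fin n, g i • A ^ (i : ℕ) := by
          rw [hq, map_sum]
          refine Finset.sum_congr rfl fun i _ => ?_
          rw [_root_.map_mul, aeval_C, map_pow, aeval_X, Algebra.smul_def]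
        rw [this]
        have := congrArg (fun v => v) hg
        -- hg : ∑ i, g i • uncurM (A^i) = 0
        apply uncurM_inj
        rw [map_sum, map_zero]
        simpa [_root_.map_smul] using hg
      by_cases hq0 : q = 0
      · intro i
        have : q.coeff (i : ℕ) = g i := by
          rw [hq, finset_sum_coeff]
          rw [Finset.sum_eq_single i]
          · simp
          · intro b _ hb
            simp [coeff_C_mul, coeff_X_pow, Fin.val_eq_val, hb.symm,
              (fun h => hb (Fin.val_injective h) : ¬ ((b:ℕ) = (i:ℕ)))]
          · simp
        rw [hq0] at this
        simpa using this.symm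
      · exfalso
        have hdle : (minpoly K A).degree ≤ q.degree :=
          minpoly.degree_le_of_ne_zero K A hq0 haq
        have hqd : q.natDegree < n := by
          have : q.natDegree ≤ n - 1 := by
            rw [hq]
            refine natDegree_sum_le_of_forall_le _ _ fun i _ => ?_
            exact le_trans (natDegree_C_mul_X_pow_le _ _) (Nat.le_sub_one_of_lt i.2)
          omega
        have h1 : (minpoly K A).natDegree ≤ q.natDegree :=
          natDegree_le_natDegree hdle
        omega
    · intro hli
      have hint : IsIntegral K A := Matrix.isIntegral A
      have hle : (minpoly K A).natDegree ≤ n := by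
        have h1 : (minpoly K A) ∣ A.charpoly := A.minpoly_dvd_charpoly
        have h2 : A.charpoly ≠ 0 := A.charpoly_monic.ne_zero
        calc (minpoly K A).natDegree ≤ A.charpoly.natDegree :=
              natDegree_le_of_dvd h1 h2
          _ = n := by rw [A.charpoly_natDegree_eq_dim, Fintype.card_fin]
      by_contra hne
      have hlt : (minpoly K A).natDegree < n := lt_of_le_of_ne hle hne
      have h0 : aeval A (minpoly K A) = 0 := minpoly.aeval K A
      rw [aeval_eq_sum_range' hlt] at h0
      rw [Fintype.linearIndependent_iff] at hli
      have h0' : ∑ i : Fin n, (minpoly K A).coeff (i : ℕ) • (uncurM n K) (A ^ (i : ℕ)) = 0 := by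
        rw [← map_zero (uncurM n K), ← h0, Finset.sum_range, map_sum]
        simp [_root_.map_smul]
      have := hli (fun i => (minpoly K A).coeff (i : ℕ)) h0' ⟨(minpoly K A).natDegree, hlt⟩
      simp only [] at this
      have hmono := (minpoly.monic hint)
      rw [Monic, leadingCoeff] at hmono
      rw [hmono] at this
      exact one_ne_zero this

/-- from linearly independent rows, extract a nonzero minor -/
lemma exists_minor_det_ne_zero {ι : Type*} [Fintype ι] [DecidableEq ι]
    {v : Fin n → ι → K} (hv : LinearIndependent K v) :
    ∃ f : Fin n → ι, (Matrix.of fun i j => v i (f j)).det ≠ 0 := by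
  classical
  set M : Matrix (Fin n) ι K := Matrix.of v with hM
  have hrows : LinearIndependent K (fun i => M i) := hv
  have hrank : M.rank = n := by
    rw [hrows.rank_matrix, Fintype.card_fin]
  have hspan : Submodule.span K (Set.range Mᵀ) = ⊤ := by
    apply Submodule.eq_top_of_finrank_eq
    rw [show Set.range Mᵀ = Set.range M.col from rfl, ← Matrix.rank_eq_finrank_span_cols, hrank]
    simp [Module.finrank_fintype_fun_eq_card]
  obtain ⟨s, hsub, hspan2, hind⟩ := exists_linearIndependent K (Set.range Mᵀ)
  rw [hspan] at hspan2
  have hsfin : s.Finite := Set.Finite.subset (Set.finite_range Mᵀ) hsub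
  haveI := hsfin.fintype
  have hcard : Fintype.card s = n := by
    have h1 : Module.finrank K (Submodule.span K s) = Fintype.card s := by
      rw [finrank_span_set_eq_card hind, Set.toFinset_card]
    rw [hspan2, finrank_top] at h1
    rw [← h1]
    simp [Module.finrank_fintype_fun_eq_card]
  obtain e : Fin n ≃ s := (Fintype.equivFinOfCardEq hcard).symm
  choose g hg using fun a : s => hsub a.2
  refine ⟨fun j => g (e j), ?_⟩
  set B : Matrix (Fin n) (Fin n) K := Matrix.of fun i j => v i (g (e j)) with hB
  have hcols : LinearIndependent K (fun j => Bᵀ j) := by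
    have : (fun j : Fin n => Bᵀ j) = fun j => (e j).1 := by
      funext j
      have := hg (e j)
      funext i
      calc Bᵀ j i = M i (g (e j)) := rfl
        _ = Mᵀ (g (e j)) i := rfl
        _ = (e j).1 i := by rw [hg (e j)]
    rw [this]
    exact hind.comp e e.injective
  have : IsUnit B := Matrix.linearIndependent_cols_iff_isUnit.mp hcols
  have := (Matrix.isUnit_iff_isUnit_det B).mp this
  exact IsUnit.ne_zero this

/-- nonzero minor implies linear independence -/
lemma li_of_minor_det_ne_zero {ι : Type*} {v : Fin n → ι → K} {f : Fin n → ι}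
    (hdet : (Matrix.of fun i j => v i (f j)).det ≠ 0) :
    LinearIndependent K v := by
  rw [Fintype.linearIndependent_iff]
  intro g hg
  have h0 : Matrix.vecMul g (Matrix.of fun i j => v i (f j)) = 0 := by
    funext j
    have := congrFun hg (f j)
    simpa [Matrix.vecMul, dotProduct] using this
  have := Matrix.eq_zero_of_vecMul_eq_zero hdet h0
  exact fun i => congrFun this i


lemma eval_aeval_poly (P : ((Fin n × Fin n) ⊕ (Fin n × Fin n)) → Polynomial K)
    (q : MvPolynomial ((Fin n × Fin n) ⊕ (Fin n × Fin n)) K) (t : K) :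
    (MvPolynomial.aeval P q).eval t = MvPolynomial.eval (fun s => (P s).eval t) q := by
  induction q using MvPolynomial.induction_on with
  | C a => simp
  | add p q hp hq => simp [hp, hq]
  | mul_X p i hp => simp [hp]

lemma mem_closure_curve [Infinite K]
    (P : ((Fin n × Fin n) ⊕ (Fin n × Fin n)) → Polynomial K)
    (S : Set (Pt n K)) (p : Polynomial K) (hp : p ≠ 0)
    (hmem : ∀ t : K, p.eval t ≠ 0 → (fun s => (P s).eval t) ∈ S)
    (t₀ : K) : (fun s => (P s).eval t₀) ∈ closure S := by
  rw [mem_closure_iff]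
  intro o ho hx0
  have key : ∀ o' : Set (Pt n K), TopologicalSpace.GenerateOpen
      { U | ∃ q : MvPolynomial ((Fin n × Fin n) ⊕ (Fin n × Fin n)) K,
        U = {x | MvPolynomial.eval x q ≠ 0} } o' →
      (fun s => (P s).eval t₀) ∈ o' →
      ∃ F : Set K, F.Finite ∧ ∀ t ∉ F, (fun s => (P s).eval t) ∈ o' := by
    intro o' ho'
    induction ho' with
    | basic u hu =>
      intro hx
      obtain ⟨q, rfl⟩ := hu
      set r : Polynomial K := MvPolynomial.aeval P q with hr
      have hrt : ∀ t, r.eval t = MvPolynomial.eval (fun s => (P s).eval t) q :=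
        eval_aeval_poly P q
      have hx' : MvPolynomial.eval (fun s => (P s).eval t₀) q ≠ 0 := hx
      have hr0 : r ≠ 0 := by
        intro h
        apply hx'
        rw [← hrt t₀, h, eval_zero]
      refine ⟨{t | r.IsRoot t}, Polynomial.finite_setOf_isRoot hr0, fun t ht => ?_⟩
      rw [Set.mem_setOf_eq, ← hrt]
      exact fun h => ht h
    | univ => exact fun _ => ⟨∅, Set.finite_empty, fun _ _ => trivial⟩
    | inter u v _ _ ihu ihv =>
      intro hx
      obtain ⟨F1, hF1, h1⟩ := ihu hx.1
      obtain ⟨F2, hF2, h2⟩ := ihv hx.2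
      exact ⟨F1 ∪ F2, hF1.union hF2, fun t ht =>
        ⟨h1 t (fun h => ht (Or.inl h)), h2 t (fun h => ht (Or.inr h))⟩⟩
    | sUnion Us hUs ih =>
      intro hx
      obtain ⟨u, hu, hxu⟩ := hx
      obtain ⟨F, hF, h⟩ := ih u hu hxu
      exact ⟨F, hF, fun t ht => ⟨u, hu, h t ht⟩⟩
  obtain ⟨F, hF, hgood⟩ := key o ho hx0
  have hfin : (F ∪ {t | p.IsRoot t}).Finite := hF.union (Polynomial.finite_setOf_isRoot hp)
  obtain ⟨t, ht⟩ := hfin.infinite_compl.nonempty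
  rw [Set.mem_compl_iff, Set.mem_union, not_or] at ht
  exact ⟨fun s => (P s).eval t, hgood t ht.1, hmem t ht.2⟩


/-- Deforming the second matrix toward a regular matrix `R` commuting with the first. -/
lemma deform_snd [Infinite K] (x : Pt n K) (hx : x ∈ CTset n K)
    (R : Matrix (Fin n) (Fin n) K)
    (hRu : ∀ i j, j < i → R i j = 0) (hreg : (minpoly K R).natDegree = n)
    (hXR : Xof x * R = R * Xof x)
    (S : Set (Pt n K))
    (hS : ∀ y : Pt n K, y ∈ CTset n K → Xof y = Xof x →
        (minpoly K (Yof y)).natDegree = n → y ∈ S) :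
    x ∈ closure S := by
  classical
  set X := Xof x with hX
  set Y := Yof x with hY
  set P : ((Fin n × Fin n) ⊕ (Fin n × Fin n)) → Polynomial K := fun s =>
    match s with
    | Sum.inl ij => C (x (Sum.inl ij))
    | Sum.inr ij => (1 - Polynomial.X) * C (Y ij.1 ij.2) + Polynomial.X * C (R ij.1 ij.2)
    with hP
  set c : K → Pt n K := fun t => fun s => (P s).eval t with hc
  have hcX : ∀ t, Xof (c t) = X := by
    intro t; ext i j; simp [hc, hP, Xof, hX]
  have hcY : ∀ t, Yof (c t) = (1 - t) • Y + t • R := by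
    intro t; ext i j
    simp [hc, hP, Yof, Matrix.add_apply, Matrix.smul_apply, smul_eq_mul]
    ring
  have hc0 : c 0 = x := by
    funext s
    rcases s with ij | ij
    · simp [hc, hP]
      try rfl
    · simp [hc, hP]
      try rfl
  -- the polynomial certificate
  set Apoly : Matrix (Fin n) (Fin n) (Polynomial K) :=
    Matrix.of fun i j => (1 - Polynomial.X) * C (Y i j) + Polynomial.X * C (R i j) with hApoly
  have hAt : ∀ t : K, Apoly.map (Polynomial.eval t) = (1 - t) • Y + t • R := by
    intro t; ext i j
    simp [hApoly, Matrix.add_apply, Matrix.smul_apply, smul_eq_mul]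
    ring
  obtain ⟨f, hf⟩ := exists_minor_det_ne_zero (regular_iff_li.mp hreg)
  set B : Matrix (Fin n) (Fin n) (Polynomial K) :=
    Matrix.of fun i j => (Apoly ^ (i : ℕ)) (f j).1 (f j).2 with hB
  set p : Polynomial K := B.det with hp
  have hpe : ∀ t : K, p.eval t =
      (Matrix.of fun i j : Fin n =>
        (((1 - t) • Y + t • R) ^ (i : ℕ)) (f j).1 (f j).2).det := by
    intro t
    have h1 : p.eval t = (B.map (Polynomial.evalRingHom t)).det := by
      rw [hp]; exact RingHom.map_det (Polynomial.evalRingHom t) B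
    rw [h1]
    congr 1
    ext i j
    have h2 : (Apoly ^ (i : ℕ)).map (Polynomial.evalRingHom t)
        = ((1 - t) • Y + t • R) ^ (i : ℕ) := by
      have := map_pow ((Polynomial.evalRingHom t).mapMatrix) Apoly (i : ℕ)
      calc (Apoly ^ (i : ℕ)).map (Polynomial.evalRingHom t)
          = ((Polynomial.evalRingHom t).mapMatrix) (Apoly ^ (i : ℕ)) := rfl
        _ = (((Polynomial.evalRingHom t).mapMatrix) Apoly) ^ (i : ℕ) := this
        _ = ((1 - t) • Y + t • R) ^ (i : ℕ) := by
            congr 1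
            exact hAt t
    calc (B.map (Polynomial.evalRingHom t)) i j
        = Polynomial.eval t ((Apoly ^ (i : ℕ)) (f j).1 (f j).2) := rfl
      _ = ((Apoly ^ (i : ℕ)).map (Polynomial.evalRingHom t)) (f j).1 (f j).2 := rfl
      _ = (((1 - t) • Y + t • R) ^ (i : ℕ)) (f j).1 (f j).2 := by rw [h2]
  have hpne : p ≠ 0 := by
    intro h0
    have h1 := hpe 1
    rw [h0, Polynomial.eval_zero] at h1
    have : ((1 - (1:K)) • Y + (1:K) • R) = R := by simp
    rw [this] at h1
    exact hf h1.symm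
  have hmem : ∀ t : K, p.eval t ≠ 0 → c t ∈ S := by
    intro t ht
    set At := (1 - t) • Y + t • R with hAtdef
    have hreg' : (minpoly K At).natDegree = n := by
      apply regular_iff_li.mpr
      apply li_of_minor_det_ne_zero (f := f)
      rw [hpe t] at ht
      exact ht
    apply hS (c t) ?_ (hcX t) (by rw [hcY t]; exact hreg')
    refine ⟨?_, ?_, ?_⟩
    · intro i j hij; rw [hcX t]; exact hx.1 i j hij
    · intro i j hij
      rw [hcY t]
      have h1 := hx.2.1 i j hij
      have h2 := hRu i j hij
      simp [Matrix.add_apply, Matrix.smul_apply, hY, h1, h2]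
    · rw [hcX t, hcY t]
      rw [Matrix.mul_add, Matrix.add_mul, mul_smul_comm, smul_mul_assoc,
        mul_smul_comm, smul_mul_assoc, hx.2.2, hXR]
  have := mem_closure_curve P S p hpne hmem 0
  rwa [show (fun s => (P s).eval 0) = x from hc0] at this

/-- Deforming the first matrix toward a regular matrix `R` commuting with the second. -/
lemma deform_fst [Infinite K] (x : Pt n K) (hx : x ∈ CTset n K)
    (R : Matrix (Fin n) (Fin n) K)
    (hRu : ∀ i j, j < i → R i j = 0) (hreg : (minpoly K R).natDegree = n)
    (hYR : Yof x * R = R * Yof x)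
    (S : Set (Pt n K))
    (hS : ∀ y : Pt n K, y ∈ CTset n K → Yof y = Yof x →
        (minpoly K (Xof y)).natDegree = n → y ∈ S) :
    x ∈ closure S := by
  classical
  set X := Xof x with hX
  set Y := Yof x with hY
  set P : ((Fin n × Fin n) ⊕ (Fin n × Fin n)) → Polynomial K := fun s =>
    match s with
    | Sum.inl ij => (1 - Polynomial.X) * C (X ij.1 ij.2) + Polynomial.X * C (R ij.1 ij.2)
    | Sum.inr ij => C (x (Sum.inr ij))
    with hP
  set c : K → Pt n K := fun t => fun s => (P s).eval t with hc
  have hcY : ∀ t, Yof (c t) = Y := by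
    intro t; ext i j; simp [hc, hP, Yof, hY]
  have hcX : ∀ t, Xof (c t) = (1 - t) • X + t • R := by
    intro t; ext i j
    simp [hc, hP, Xof, Matrix.add_apply, Matrix.smul_apply, smul_eq_mul]
    ring
  have hc0 : c 0 = x := by
    funext s
    rcases s with ij | ij
    · simp [hc, hP]
      try rfl
    · simp [hc, hP]
      try rfl
  set Apoly : Matrix (Fin n) (Fin n) (Polynomial K) :=
    Matrix.of fun i j => (1 - Polynomial.X) * C (X i j) + Polynomial.X * C (R i j) with hApoly
  have hAt : ∀ t : K, Apoly.map (Polynomial.eval t) = (1 - t) • X + t • R := by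
    intro t; ext i j
    simp [hApoly, Matrix.add_apply, Matrix.smul_apply, smul_eq_mul]
    ring
  obtain ⟨f, hf⟩ := exists_minor_det_ne_zero (regular_iff_li.mp hreg)
  set B : Matrix (Fin n) (Fin n) (Polynomial K) :=
    Matrix.of fun i j => (Apoly ^ (i : ℕ)) (f j).1 (f j).2 with hB
  set p : Polynomial K := B.det with hp
  have hpe : ∀ t : K, p.eval t =
      (Matrix.of fun i j : Fin n =>
        (((1 - t) • X + t • R) ^ (i : ℕ)) (f j).1 (f j).2).det := by
    intro t
    have h1 : p.eval t = (B.map (Polynomial.evalRingHom t)).det := by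
      rw [hp]; exact RingHom.map_det (Polynomial.evalRingHom t) B
    rw [h1]
    congr 1
    ext i j
    have h2 : (Apoly ^ (i : ℕ)).map (Polynomial.evalRingHom t)
        = ((1 - t) • X + t • R) ^ (i : ℕ) := by
      have := map_pow ((Polynomial.evalRingHom t).mapMatrix) Apoly (i : ℕ)
      calc (Apoly ^ (i : ℕ)).map (Polynomial.evalRingHom t)
          = ((Polynomial.evalRingHom t).mapMatrix) (Apoly ^ (i : ℕ)) := rfl
        _ = (((Polynomial.evalRingHom t).mapMatrix) Apoly) ^ (i : ℕ) := this
        _ = ((1 - t) • X + t • R) ^ (i : ℕ) := by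
            congr 1
            exact hAt t
    calc (B.map (Polynomial.evalRingHom t)) i j
        = Polynomial.eval t ((Apoly ^ (i : ℕ)) (f j).1 (f j).2) := rfl
      _ = ((Apoly ^ (i : ℕ)).map (Polynomial.evalRingHom t)) (f j).1 (f j).2 := rfl
      _ = (((1 - t) • X + t • R) ^ (i : ℕ)) (f j).1 (f j).2 := by rw [h2]
  have hpne : p ≠ 0 := by
    intro h0
    have h1 := hpe 1
    rw [h0, Polynomial.eval_zero] at h1
    have : ((1 - (1:K)) • X + (1:K) • R) = R := by simp
    rw [this] at h1
    exact hf h1.symm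
  have hmem : ∀ t : K, p.eval t ≠ 0 → c t ∈ S := by
    intro t ht
    set At := (1 - t) • X + t • R with hAtdef
    have hreg' : (minpoly K At).natDegree = n := by
      apply regular_iff_li.mpr
      apply li_of_minor_det_ne_zero (f := f)
      rw [hpe t] at ht
      exact ht
    apply hS (c t) ?_ (hcY t) (by rw [hcX t]; exact hreg')
    refine ⟨?_, ?_, ?_⟩
    · intro i j hij
      rw [hcX t]
      have h1 := hx.1 i j hij
      have h2 := hRu i j hij
      simp [Matrix.add_apply, Matrix.smul_apply, hX, h1, h2]
    · intro i j hij; rw [hcY t]; exact hx.2.1 i j hij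
    · rw [hcX t, hcY t]
      rw [Matrix.add_mul, Matrix.mul_add, smul_mul_assoc, mul_smul_comm,
        smul_mul_assoc, mul_smul_comm, hx.2.2, hYR]
  have := mem_closure_curve P S p hpne hmem 0
  rwa [show (fun s => (P s).eval 0) = x from hc0] at this

end Aux

section Final
variable {K : Type*} [Field K] {n : ℕ} [Infinite K]

lemma regX_mem (x : Pt n K) (hx : x ∈ CTset n K)
    (hXreg : (minpoly K (Xof x)).natDegree = n) : x ∈ CT0 n K :=
  deform_snd x hx (Xof x) hx.1 hXreg rfl _
    (fun y hy hXy hYy => ⟨hy, by rw [hXy]; exact hXreg, hYy⟩)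

lemma regY_mem (x : Pt n K) (hx : x ∈ CTset n K)
    (hYreg : (minpoly K (Yof x)).natDegree = n) : x ∈ CT0 n K :=
  deform_fst x hx (Yof x) hx.2.1 hYreg rfl _
    (fun y hy hYy hXy => ⟨hy, hXy, by rw [hYy]; exact hYreg⟩)

end Final

/-- If `(X,Y) ∈ CT_n` and `X` or `Y` commutes with a regular upper triangular matrix,
then `(X,Y) ∈ CT_n^0`. -/
theorem stmt6 {n : ℕ} {K : Type*} [Field K] [IsAlgClosed K]
    (x : Pt n K) (hx : x ∈ CTset n K)
    (h : (∃ R : Matrix (Fin n) (Fin n) K, (∀ i j, j < i → R i j = 0) ∧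
            (minpoly K R).natDegree = n ∧ Xof x * R = R * Xof x) ∨
         (∃ R : Matrix (Fin n) (Fin n) K, (∀ i j, j < i → R i j = 0) ∧
            (minpoly K R).natDegree = n ∧ Yof x * R = R * Yof x)) :
    x ∈ CT0 n K := by
  rcases h with ⟨R, hRu, hreg, hXR⟩ | ⟨R, hRu, hreg, hYR⟩
  · have h1 : x ∈ closure {y : Pt n K | y ∈ CTset n K ∧ (minpoly K (Yof y)).natDegree = n} :=
      deform_snd x hx R hRu hreg hXR _ (fun y hy _ hYreg => ⟨hy, hYreg⟩)
    exact closure_minimal (fun y hy => regY_mem y hy.1 hy.2) isClosed_closure h1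
  · have h1 : x ∈ closure {y : Pt n K | y ∈ CTset n K ∧ (minpoly K (Xof y)).natDegree = n} :=
      deform_fst x hx R hRu hreg hYR _ (fun y hy _ hXreg => ⟨hy, hXreg⟩)
    exact closure_minimal (fun y hy => regX_mem y hy.1 hy.2) isClosed_closure h1
end

section
/- Every irreducible component of CT_n is stable under the action of the group K² given by (x,y)·(X,Y) = (X + xI_n, Y + yI_n), and consequently the set of pairs (X,Y) with both X and Y invertible is dense in every irreducible component of CT_n. -/
open Matrix Polynomial

/-- Encode a pair of matrices as a point. -/
def enc {n : ℕ} {K : Type*} (X Y : Matrix (Fin n) (Fin n) K) : Pt n K :=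
  fun s => Sum.elim (fun p => X p.1 p.2) (fun p => Y p.1 p.2) s

/-- The translation action of `K²` on pairs: `(x,y)·(X,Y) = (X + xI, Y + yI)`. -/
def tr {n : ℕ} {K : Type*} [CommRing K] (a b : K) (x : Pt n K) : Pt n K :=
  enc (Xof x + a • (1 : Matrix (Fin n) (Fin n) K)) (Yof x + b • (1 : Matrix (Fin n) (Fin n) K))


abbrev Idx (n : ℕ) := (Fin n × Fin n) ⊕ (Fin n × Fin n)

section aux
variable {n : ℕ} {K : Type*} [Field K]

def coefT (a b : K) : Idx n → K :=
  Sum.elim (fun p => if p.1 = p.2 then a else 0) (fun p => if p.1 = p.2 then b else 0)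

lemma Xof_tr (a b : K) (x : Pt n K) :
    Xof (tr a b x) = Xof x + a • (1 : Matrix (Fin n) (Fin n) K) := rfl
lemma Yof_tr (a b : K) (x : Pt n K) :
    Yof (tr a b x) = Yof x + b • (1 : Matrix (Fin n) (Fin n) K) := rfl

lemma tr_apply (a b : K) (x : Pt n K) (c : Idx n) :
    tr a b x c = x c + coefT a b c := by
  rcases c with ⟨i, j⟩ | ⟨i, j⟩ <;>
    simp [tr, enc, Xof, Yof, coefT, Matrix.one_apply, mul_ite, mul_one, mul_zero]

lemma coefT_add (a b c d : K) (e : Idx n) :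
    coefT (a + c) (b + d) e = coefT a b e + coefT c d e := by
  rcases e with ⟨i, j⟩ | ⟨i, j⟩ <;> simp only [coefT, Sum.elim_inl, Sum.elim_inr] <;>
    split <;> simp

lemma coefT_mul (u v t : K) (e : Idx n) :
    coefT (u * t) (v * t) e = coefT u v e * t := by
  rcases e with ⟨i, j⟩ | ⟨i, j⟩ <;> simp [coefT] <;> split <;> simp

lemma tr_tr (a b c d : K) (x : Pt n K) : tr a b (tr c d x) = tr (a + c) (b + d) x := by
  funext e; rw [tr_apply, tr_apply, tr_apply, coefT_add]; ring

lemma tr_zero (x : Pt n K) : tr (0:K) 0 x = x := by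
  funext e; rw [tr_apply]
  rcases e with ⟨i, j⟩ | ⟨i, j⟩ <;> simp [coefT]

-- substitution identities
lemma eval_eval₂_C (x : Idx n → K) (g : Idx n → MvPolynomial (Idx n) K)
    (p : MvPolynomial (Idx n) K) :
    MvPolynomial.eval x (MvPolynomial.eval₂ MvPolynomial.C g p)
      = MvPolynomial.eval (fun c => MvPolynomial.eval x (g c)) p := by
  rw [MvPolynomial.eval₂_comp_left (MvPolynomial.eval x)]
  have h1 : (MvPolynomial.eval x).comp (MvPolynomial.C : K →+* MvPolynomial (Idx n) K)
      = RingHom.id K := by ext r; simp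
  rw [h1, MvPolynomial.eval₂_id]; rfl

lemma polyeval_eval₂_C (t : K) (g : Idx n → Polynomial K) (p : MvPolynomial (Idx n) K) :
    Polynomial.eval t (MvPolynomial.eval₂ Polynomial.C g p)
      = MvPolynomial.eval (fun c => Polynomial.eval t (g c)) p := by
  rw [← Polynomial.coe_evalRingHom, MvPolynomial.eval₂_comp_left (Polynomial.evalRingHom t)]
  have h1 : (Polynomial.evalRingHom t).comp (Polynomial.C : K →+* Polynomial K)
      = RingHom.id K := by ext r; simp
  rw [h1, MvPolynomial.eval₂_id]; rfl

lemma isOpen_basic (p : MvPolynomial (Idx n) K) :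
    IsOpen {x : Pt n K | MvPolynomial.eval x p ≠ 0} :=
  TopologicalSpace.isOpen_generateFrom_of_mem ⟨p, rfl⟩

lemma continuous_tr (a b : K) : Continuous (tr a b : Pt n K → Pt n K) := by
  apply continuous_generateFrom_iff.mpr
  rintro U ⟨p, rfl⟩
  have : (tr a b : Pt n K → Pt n K) ⁻¹' {x | MvPolynomial.eval x p ≠ 0}
      = {x : Pt n K | MvPolynomial.eval x
          (MvPolynomial.eval₂ MvPolynomial.C
            (fun c => MvPolynomial.X c + MvPolynomial.C (coefT a b c)) p) ≠ 0} := by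
    ext x
    simp only [Set.mem_preimage, Set.mem_setOf_eq, eval_eval₂_C]
    have : (fun c => MvPolynomial.eval x
        (MvPolynomial.X c + MvPolynomial.C (coefT a b c))) = tr a b x := by
      funext c; simp [tr_apply]
    rw [this]
  rw [this]
  exact isOpen_basic _

lemma continuous_orbit (u v : K) (x : Pt n K) :
    Continuous (fun t : CofiniteTopology K =>
      tr (u * (CofiniteTopology.of.symm t)) (v * (CofiniteTopology.of.symm t)) x) := by
  apply continuous_generateFrom_iff.mpr
  rintro U ⟨p, rfl⟩
  set q : Polynomial K := MvPolynomial.eval₂ Polynomial.C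
      (fun c => Polynomial.C (x c) + Polynomial.C (coefT u v c) * Polynomial.X) p with hq
  have key : ∀ t : K, MvPolynomial.eval (tr (u * t) (v * t) x) p = Polynomial.eval t q := by
    intro t
    have hfun : (fun c => Polynomial.eval t
        (Polynomial.C (x c) + Polynomial.C (coefT u v c) * Polynomial.X)) = tr (u * t) (v * t) x := by
      funext c; simp [tr_apply, coefT_mul]
    rw [hq, polyeval_eval₂_C, hfun]
  have : (fun t : CofiniteTopology K =>
      tr (u * (CofiniteTopology.of.symm t)) (v * (CofiniteTopology.of.symm t)) x) ⁻¹'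
      {y | MvPolynomial.eval y p ≠ 0}
      = {t : CofiniteTopology K | Polynomial.eval (CofiniteTopology.of.symm t) q ≠ 0} := by
    ext t; simp [key]
  rw [this, CofiniteTopology.isOpen_iff']
  by_cases hq0 : q = 0
  · left; simp [hq0]
  · right
    have hfin : {t : K | Polynomial.IsRoot q t}.Finite := Polynomial.finite_setOf_isRoot hq0
    have : {t : CofiniteTopology K | Polynomial.eval (CofiniteTopology.of.symm t) q ≠ 0}ᶜ
        = (CofiniteTopology.of.symm) ⁻¹' {t : K | Polynomial.IsRoot q t} := by
      ext t; simp [Polynomial.IsRoot]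
    rw [this]
    exact hfin.preimage (Equiv.injective _).injOn

lemma tr_mem_CT {a b : K} {x : Pt n K} (hx : x ∈ CTset n K) : tr a b x ∈ CTset n K := by
  obtain ⟨h1, h2, h3⟩ := hx
  refine ⟨?_, ?_, ?_⟩
  · intro i j hij
    rw [Xof_tr]
    simp [Matrix.add_apply, Matrix.one_apply, hij.ne', h1 i j hij]
  · intro i j hij
    rw [Yof_tr]
    simp [Matrix.add_apply, Matrix.one_apply, hij.ne', h2 i j hij]
  · rw [Xof_tr, Yof_tr]
    have hc : Commute (Xof x) (Yof x) := h3
    have C1 : Commute (Xof x) (Yof x + b • 1) :=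
      hc.add_right ((Commute.one_right (Xof x)).smul_right b)
    have C2 : Commute (a • (1 : Matrix (Fin n) (Fin n) K)) (Yof x + b • 1) :=
      ((Commute.one_left (Yof x)).smul_left a).add_right
        (((Commute.refl (1 : Matrix (Fin n) (Fin n) K)).smul_left a).smul_right b)
    exact (C1.add_left C2).eq

end aux

section noeth
variable {n : ℕ} {K : Type*} [Field K]

noncomputable def specMap (x : Pt n K) : PrimeSpectrum (MvPolynomial (Idx n) K) :=
  ⟨RingHom.ker (MvPolynomial.eval x), RingHom.ker_isPrime _⟩

lemma inducing_specMap : Topology.IsInducing (specMap (n := n) (K := K)) := by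
  refine ⟨?_⟩
  have hb := TopologicalSpace.IsTopologicalBasis.induced (α := Pt n K)
    (specMap (n := n) (K := K)) PrimeSpectrum.isTopologicalBasis_basic_opens
  have hb2 := @TopologicalSpace.IsTopologicalBasis.eq_generateFrom _
      (TopologicalSpace.induced (specMap (n := n) (K := K)) inferInstance) _ hb
  rw [show (TopologicalSpace.induced (specMap (n := n) (K := K)) inferInstance : TopologicalSpace (Pt n K)) = _ from hb2]
  have hpt : ptTop n K = TopologicalSpace.generateFrom
      {U | ∃ p : MvPolynomial (Idx n) K, U = {x : Pt n K | MvPolynomial.eval x p ≠ 0}} := rfl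
  rw [hpt]
  congr 1
  ext U
  constructor
  · rintro ⟨p, rfl⟩
    refine ⟨↑(PrimeSpectrum.basicOpen p), ⟨p, rfl⟩, ?_⟩
    ext x
    simp [specMap, PrimeSpectrum.basicOpen, RingHom.mem_ker]
    exact Iff.rfl
  · rintro ⟨V, ⟨p, rfl⟩, rfl⟩
    refine ⟨p, ?_⟩
    ext x
    simp [specMap, PrimeSpectrum.basicOpen, RingHom.mem_ker]
    exact Iff.rfl

instance : TopologicalSpace.NoetherianSpace (Pt n K) := by
  rw [TopologicalSpace.noetherianSpace_iff_isCompact]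
  intro s
  rw [inducing_specMap.isCompact_iff]
  exact TopologicalSpace.NoetherianSpace.isCompact _

end noeth

section subtypeAct
variable {n : ℕ} {K : Type*} [Field K]

def TT (a b : K) (x : ↥(CTset n K)) : ↥(CTset n K) := ⟨tr a b x.1, tr_mem_CT x.2⟩

lemma TT_comp (a b c d : K) (x : ↥(CTset n K)) : TT a b (TT c d x) = TT (a + c) (b + d) x :=
  Subtype.ext (tr_tr a b c d x.1)

lemma TT_zero (x : ↥(CTset n K)) : TT (0:K) 0 x = x := Subtype.ext (tr_zero x.1)

lemma continuous_TT (a b : K) : Continuous (TT a b : ↥(CTset n K) → ↥(CTset n K)) :=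
  Continuous.subtype_mk ((continuous_tr a b).comp continuous_subtype_val) _

lemma TT_inv (a b : K) (s : Set ↥(CTset n K)) : TT (-a) (-b) '' (TT a b '' s) = s := by
  rw [Set.image_image]
  have : (fun x => TT (-a) (-b) (TT a b x)) = (id : ↥(CTset n K) → ↥(CTset n K)) := by
    funext x; rw [TT_comp]; simp [TT_zero]
  rw [this, Set.image_id]

lemma TT_inv' (a b : K) (s : Set ↥(CTset n K)) : TT a b '' (TT (-a) (-b) '' s) = s := by
  have := TT_inv (-a) (-b) s
  rwa [neg_neg, neg_neg] at this

lemma TT_image_mem {s : Set ↥(CTset n K)} (hs : s ∈ irreducibleComponents ↥(CTset n K))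
    (a b : K) : TT a b '' s ∈ irreducibleComponents ↥(CTset n K) := by
  constructor
  · exact hs.1.image _ (continuous_TT a b).continuousOn
  · intro u hu hsu
    have h2 : s ⊆ TT (-a) (-b) '' u := by
      rw [← TT_inv a b s]; exact Set.image_mono hsu
    have h3 := hs.2 (hu.image _ (continuous_TT (-a) (-b)).continuousOn) h2
    calc u = TT a b '' (TT (-a) (-b) '' u) := (TT_inv' a b u).symm
      _ ⊆ TT a b '' s := Set.image_mono h3

lemma continuous_orbit_TT (u v : K) (x : ↥(CTset n K)) :
    Continuous (fun t : CofiniteTopology K =>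
      TT (u * (CofiniteTopology.of.symm t)) (v * (CofiniteTopology.of.symm t)) x) :=
  Continuous.subtype_mk (continuous_orbit u v x.1) _

lemma stab {s : Set ↥(CTset n K)} [Infinite K]
    (hs : s ∈ irreducibleComponents ↥(CTset n K)) (u v t : K) :
    TT (u * t) (v * t) '' s ⊆ s := by
  classical
  have hF : (irreducibleComponents ↥(CTset n K)).Finite :=
    TopologicalSpace.NoetherianSpace.finite_irreducibleComponents
  set S : Set ↥(CTset n K) → Set (CofiniteTopology K) := fun c =>
    {t | TT (u * (CofiniteTopology.of.symm t)) (v * (CofiniteTopology.of.symm t)) '' s ⊆ c}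
    with hS
  have hclosed : ∀ c ∈ irreducibleComponents ↥(CTset n K), IsClosed (S c) := by
    intro c hc
    have hSeq : S c = ⋂ (x : ↥(CTset n K)) (_ : x ∈ s),
        {t : CofiniteTopology K |
          TT (u * (CofiniteTopology.of.symm t)) (v * (CofiniteTopology.of.symm t)) x ∈ c} := by
      ext t
      simp only [hS, Set.mem_setOf_eq, Set.mem_iInter, Set.subset_def]
      exact Set.forall_mem_image
    rw [hSeq]
    exact isClosed_iInter fun x => isClosed_iInter fun _ =>
      (isClosed_of_mem_irreducibleComponents c hc).preimage (continuous_orbit_TT u v x)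
  have hcover : ∀ t : K, (TT (u * t) (v * t) '' s) ∈ irreducibleComponents ↥(CTset n K) :=
    fun t => TT_image_mem hs _ _
  have hinfK : Infinite (CofiniteTopology K) :=
    (Equiv.infinite_iff (CofiniteTopology.of (X := K))).mp inferInstance
  have hinf : ∃ c ∈ irreducibleComponents ↥(CTset n K), (S c).Infinite := by
    by_contra h
    push_neg at h
    have hsub : (Set.univ : Set (CofiniteTopology K)) ⊆
        ⋃ c ∈ irreducibleComponents ↥(CTset n K), S c := by
      intro t _
      refine Set.mem_biUnion (hcover (CofiniteTopology.of.symm t)) ?_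
      simp only [hS, Set.mem_setOf_eq]
      exact Set.Subset.refl _
    exact Set.infinite_univ ((hF.biUnion h).subset hsub)
  obtain ⟨c, hc, hinfc⟩ := hinf
  have huniv : S c = Set.univ := by
    rcases CofiniteTopology.isClosed_iff.mp (hclosed c hc) with h | h
    · exact h
    · exact absurd h hinfc
  have h0 : (CofiniteTopology.of (0 : K)) ∈ S c := huniv ▸ Set.mem_univ _
  have hs_sub : s ⊆ c := by
    simp only [hS, Set.mem_setOf_eq, Equiv.symm_apply_apply, mul_zero] at h0
    intro x hx
    exact h0 ⟨x, hx, TT_zero x⟩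
  have hcs : c = s := le_antisymm (hs.2 hc.1 hs_sub) hs_sub
  have ht : (CofiniteTopology.of t) ∈ S c := huniv ▸ Set.mem_univ _
  rw [hcs] at ht
  simpa only [hS, Set.mem_setOf_eq, Equiv.symm_apply_apply] using ht

end subtypeAct

section main
variable {n : ℕ} {K : Type*} [Field K]

lemma det_Xof_eval (y : Pt n K) :
    (Xof y).det = MvPolynomial.eval y
      ((Matrix.of fun i j => MvPolynomial.X (Sum.inl (i, j)) :
        Matrix (Fin n) (Fin n) (MvPolynomial (Idx n) K))).det := by
  rw [RingHom.map_det]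
  congr 1
  ext i j
  simp [Xof, Matrix.map_apply]

lemma det_Yof_eval (y : Pt n K) :
    (Yof y).det = MvPolynomial.eval y
      ((Matrix.of fun i j => MvPolynomial.X (Sum.inr (i, j)) :
        Matrix (Fin n) (Fin n) (MvPolynomial (Idx n) K))).det := by
  rw [RingHom.map_det]
  congr 1
  ext i j
  simp [Yof, Matrix.map_apply]

lemma isOpen_dets :
    IsOpen {y : Pt n K | (Xof y).det ≠ 0 ∧ (Yof y).det ≠ 0} := by
  have heq : {y : Pt n K | (Xof y).det ≠ 0 ∧ (Yof y).det ≠ 0}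
      = {y : Pt n K | (Xof y).det ≠ 0} ∩ {y : Pt n K | (Yof y).det ≠ 0} := rfl
  rw [heq]
  apply IsOpen.inter
  · have h : {y : Pt n K | (Xof y).det ≠ 0} = {y : Pt n K | MvPolynomial.eval y
        ((Matrix.of fun i j => MvPolynomial.X (Sum.inl (i, j)) :
          Matrix (Fin n) (Fin n) (MvPolynomial (Idx n) K))).det ≠ 0} := by
      ext y; simp [det_Xof_eval]
    rw [h]; exact isOpen_basic _
  · have h : {y : Pt n K | (Yof y).det ≠ 0} = {y : Pt n K | MvPolynomial.eval y
        ((Matrix.of fun i j => MvPolynomial.X (Sum.inr (i, j)) :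
          Matrix (Fin n) (Fin n) (MvPolynomial (Idx n) K))).det ≠ 0} := by
      ext y; simp [det_Yof_eval]
    rw [h]; exact isOpen_basic _

end main


/-- Every irreducible component of `CT_n` is stable under the translation action of `K²`,
and the pairs of invertible matrices are dense in each irreducible component. -/
theorem stmt7 (n : ℕ) (K : Type*) [Field K] [IsAlgClosed K] :
    ∀ s ∈ irreducibleComponents ↥(CTset n K),
      (∀ a b : K, (fun x => tr a b x) '' (Subtype.val '' s) ⊆ Subtype.val '' s) ∧
      Subtype.val '' s ⊆
        closure ((Subtype.val '' s) ∩ {x : Pt n K | IsUnit (Xof x) ∧ IsUnit (Yof x)}) := by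
  intro s hs
  classical
  have stab' : ∀ a b : K, ∀ x ∈ s, TT a b x ∈ s := by
    intro a b x hx
    have h1 : TT a (0:K) x ∈ s := by
      have := stab hs 1 0 a (Set.mem_image_of_mem _ hx)
      simpa using this
    have h2 : TT (0:K) b (TT a (0:K) x) ∈ s := by
      have := stab hs 0 1 b (Set.mem_image_of_mem _ h1)
      simpa using this
    have h3 : TT (0:K) b (TT a (0:K) x) = TT a b x := by
      rw [TT_comp]; norm_num
    rwa [h3] at h2
  constructor
  · intro a b y hy
    obtain ⟨z, ⟨w, hw, rfl⟩, rfl⟩ := hy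
    exact ⟨TT a b w, stab' a b w hw, rfl⟩
  · intro z hz
    obtain ⟨w, hw, rfl⟩ := hz
    have hs'irr : IsIrreducible (Subtype.val '' s) :=
      hs.1.image _ continuous_subtype_val.continuousOn
    rw [mem_closure_iff]
    intro o ho hzo
    -- find a translate of w with invertible matrices
    obtain ⟨hX, hY, -⟩ := w.2
    obtain ⟨a, ha⟩ := Infinite.exists_notMem_finset
      (Finset.image (fun i => -(Xof w.1 i i)) Finset.univ)
    obtain ⟨b, hb⟩ := Infinite.exists_notMem_finset
      (Finset.image (fun i => -(Yof w.1 i i)) Finset.univ)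
    have hdetX : (Xof (tr a b w.1)).det ≠ 0 := by
      rw [Xof_tr]
      have htri : Matrix.BlockTriangular (Xof w.1 + a • (1 : Matrix (Fin n) (Fin n) K)) id := by
        intro i j hij
        replace hij : j < i := hij
        simp [Matrix.add_apply, Matrix.one_apply, hij.ne', hX i j hij]
      rw [Matrix.det_of_upperTriangular htri]
      apply Finset.prod_ne_zero_iff.mpr
      intro i _
      simp only [Matrix.add_apply, Matrix.smul_apply, Matrix.one_apply_eq, smul_eq_mul, mul_one]
      intro hcon
      exact ha (Finset.mem_image.mpr ⟨i, Finset.mem_univ i,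
        (by linear_combination -hcon)⟩)
    have hdetY : (Yof (tr a b w.1)).det ≠ 0 := by
      rw [Yof_tr]
      have htri : Matrix.BlockTriangular (Yof w.1 + b • (1 : Matrix (Fin n) (Fin n) K)) id := by
        intro i j hij
        replace hij : j < i := hij
        simp [Matrix.add_apply, Matrix.one_apply, hij.ne', hY i j hij]
      rw [Matrix.det_of_upperTriangular htri]
      apply Finset.prod_ne_zero_iff.mpr
      intro i _
      simp only [Matrix.add_apply, Matrix.smul_apply, Matrix.one_apply_eq, smul_eq_mul, mul_one]
      intro hcon
      exact hb (Finset.mem_image.mpr ⟨i, Finset.mem_univ i,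
        (by linear_combination -hcon)⟩)
    have hsV : ((Subtype.val '' s) ∩
        {y : Pt n K | (Xof y).det ≠ 0 ∧ (Yof y).det ≠ 0}).Nonempty :=
      ⟨tr a b w.1, ⟨TT a b w, stab' a b w hw, rfl⟩, hdetX, hdetY⟩
    have hso : ((Subtype.val '' s) ∩ o).Nonempty := ⟨w.1, ⟨w, hw, rfl⟩, hzo⟩
    obtain ⟨y, hys, hyo, hyX, hyY⟩ := hs'irr.2 o _ ho isOpen_dets hso hsV
    refine ⟨y, hyo, hys, ?_, ?_⟩
    · exact (Matrix.isUnit_iff_isUnit_det _).mpr (isUnit_iff_ne_zero.mpr hyX)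
    · exact (Matrix.isUnit_iff_isUnit_det _).mpr (isUnit_iff_ne_zero.mpr hyY)
end

section
/- Let (X,Y) be a pair of commuting n×n upper triangular matrices, with X having eigenvalues λ_1,...,λ_r and minimal polynomial ∏(t-λ_i)^{m_i}. Then there exist an invertible upper triangular matrix G and a partition {E_1,...,E_r} of the basis {Ge_1,...,Ge_n} such that ker (X-λ_i I_n)^{m_i} = span(E_i) and span(E_i) is stable under both X and Y for each i. -/
open Matrix Polynomial



section Aux
variable {K : Type*} [Field K] {M : Type*} [AddCommGroup M] [Module K M]

lemma aux_pow_mem (f : Module.End K M) (N : Submodule K M) (hN : ∀ x ∈ N, f x ∈ N)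
    (k : ℕ) : ∀ x ∈ N, (f ^ k) x ∈ N := by
  induction k with
  | zero => intro x hx; simpa using hx
  | succ k ih =>
    intro x hx
    rw [pow_succ, Module.End.mul_apply]
    exact ih _ (hN x hx)

lemma aux_aeval_mem (f : Module.End K M) (N : Submodule K M) (hN : ∀ x ∈ N, f x ∈ N)
    (c : K[X]) : ∀ x ∈ N, (aeval f c) x ∈ N := by
  induction c using Polynomial.induction_on' with
  | add p q hp hq =>
    intro x hx
    rw [map_add, LinearMap.add_apply]
    exact N.add_mem (hp x hx) (hq x hx)
  | monomial k a =>
    intro x hx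
    rw [aeval_monomial, Module.End.mul_apply, Module.algebraMap_end_apply]
    exact N.smul_mem _ (aux_pow_mem f N hN k x hx)

lemma aux_aeval_comp (f : Module.End K M) (c d : K[X]) (x : M) :
    (aeval f c) ((aeval f d) x) = (aeval f (c * d)) x := by
  rw [_root_.map_mul, Module.End.mul_apply]

lemma decomp_exists {ι : Type*} [DecidableEq ι] (f : Module.End K M) (s : Finset ι)
    (p : ι → K[X]) (hcop : (s : Set ι).Pairwise (Function.onFun IsCoprime p)) :
    ∀ u : M, (aeval f (∏ i ∈ s, p i)) u = 0 →
    ∃ w : ι → M, (∀ i, ∃ c : K[X], w i = (aeval f c) u) ∧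
      (∀ i ∈ s, (aeval f (p i)) (w i) = 0) ∧ (∀ i ∉ s, w i = 0) ∧ ∑ i ∈ s, w i = u := by
  classical
  induction s using Finset.induction with
  | empty =>
    intro u hu
    refine ⟨fun _ => 0, fun i => ⟨0, by simp⟩, by simp, fun _ _ => rfl, ?_⟩
    simpa using hu.symm
  | @insert a t ha ih =>
    intro u hu
    have hcop' : (t : Set ι).Pairwise (Function.onFun IsCoprime p) :=
      hcop.mono (by intro x hx; simp only [Finset.coe_insert, Set.mem_insert_iff]; exact Or.inr hx)
    have hcap : IsCoprime (p a) (∏ i ∈ t, p i) := by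
      refine IsCoprime.prod_right fun i hi => ?_
      exact hcop (by simp) (by simp [hi]) (fun h => ha (h ▸ hi))
    obtain ⟨c, d, hcd⟩ := hcap
    have hprod : (∏ i ∈ insert a t, p i) = p a * ∏ i ∈ t, p i := Finset.prod_insert ha
    set u1 := (aeval f (d * ∏ i ∈ t, p i)) u with hu1
    set u2 := (aeval f (c * p a)) u with hu2
    have hsum : u1 + u2 = u := by
      rw [hu1, hu2, ← LinearMap.add_apply, ← map_add, add_comm (d * _), hcd]
      simp
    have hu1k : (aeval f (p a)) u1 = 0 := by
      rw [hu1, aux_aeval_comp]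
      have : p a * (d * ∏ i ∈ t, p i) = d * ∏ i ∈ insert a t, p i := by
        rw [hprod]; ring
      rw [this, ← aux_aeval_comp, hu, map_zero]
    have hu2k : (aeval f (∏ i ∈ t, p i)) u2 = 0 := by
      rw [hu2, aux_aeval_comp]
      have : (∏ i ∈ t, p i) * (c * p a) = c * ∏ i ∈ insert a t, p i := by
        rw [hprod]; ring
      rw [this, ← aux_aeval_comp, hu, map_zero]
    obtain ⟨w', hw'c, hw'k, hw'0, hw's⟩ := ih hcop' u2 hu2k
    refine ⟨Function.update w' a u1, ?_, ?_, ?_, ?_⟩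
    · intro i
      by_cases h : i = a
      · subst h; exact ⟨d * ∏ i ∈ t, p i, by simp [Function.update_self, hu1]⟩
      · obtain ⟨e, he⟩ := hw'c i
        exact ⟨e * (c * p a), by rw [Function.update_of_ne h, he, hu2, aux_aeval_comp]⟩
    · intro i hi
      rcases Finset.mem_insert.mp hi with h | h
      · subst h; simpa [Function.update_self] using hu1k
      · rw [Function.update_of_ne (by intro he; exact ha (he ▸ h))]
        exact hw'k i h
    · intro i hi
      rw [Function.update_of_ne (fun he => hi (by rw [he]; exact Finset.mem_insert_self a t))]
      exact hw'0 i (fun h => hi (Finset.mem_insert_of_mem h))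
    · rw [Finset.sum_insert ha, Function.update_self]
      have : ∑ i ∈ t, Function.update w' a u1 i = ∑ i ∈ t, w' i := by
        refine Finset.sum_congr rfl fun i hi => ?_
        rw [Function.update_of_ne (fun he => ha (by rwa [he] at hi))]
      rw [this, hw's, hsum]

lemma decomp_unique {ι : Type*} [DecidableEq ι] (f : Module.End K M) (s : Finset ι)
    (p : ι → K[X]) (hcop : (s : Set ι).Pairwise (Function.onFun IsCoprime p))
    (v : ι → M) (hv : ∀ i ∈ s, (aeval f (p i)) (v i) = 0)
    (hsum : ∑ i ∈ s, v i = 0) : ∀ i ∈ s, v i = 0 := by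
  intro i hi
  set q := ∏ j ∈ s.erase i, p j with hq
  have hcapq : IsCoprime (p i) q := by
    refine IsCoprime.prod_right fun j hj => ?_
    exact hcop hi (Finset.mem_of_mem_erase hj) (fun h => (Finset.ne_of_mem_erase hj) h.symm)
  obtain ⟨c, d, hcd⟩ := hcapq
  have hqv : ∀ j ∈ s.erase i, (aeval f q) (v j) = 0 := by
    intro j hj
    obtain ⟨e, he⟩ := Finset.dvd_prod_of_mem p hj
    rw [hq, he, mul_comm, ← aux_aeval_comp, hv j (Finset.mem_of_mem_erase hj), map_zero]
  have hqi : (aeval f q) (v i) = 0 := by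
    have h0 : ∑ j ∈ s, (aeval f q) (v j) = 0 := by
      rw [← map_sum, hsum, map_zero]
    rw [← Finset.add_sum_erase s _ hi] at h0
    rw [Finset.sum_eq_zero hqv, add_zero] at h0
    exact h0
  have : v i = (aeval f (c * p i)) (v i) + (aeval f (d * q)) (v i) := by
    rw [← LinearMap.add_apply, ← map_add, hcd]; simp
  rw [this, ← aux_aeval_comp, ← aux_aeval_comp, hv i hi, hqi, map_zero, map_zero, add_zero]

end Aux

section Aux2
variable {K : Type*} [Field K] {M : Type*} [AddCommGroup M] [Module K M]

lemma aux_commute (f g : Module.End K M) (h : Commute g f) (c : Polynomial K) :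
    Commute g (Polynomial.aeval f c) := by
  induction c using Polynomial.induction_on' with
  | add p q hp hq => rw [map_add]; exact hp.add_right hq
  | monomial k a =>
    rw [Polynomial.aeval_monomial]
    have h1 : Commute ((algebraMap K (Module.End K M)) a) g := Algebra.commutes a g
    exact (h1.symm).mul_right (h.pow_right k)

end Aux2

/-- For a commuting pair `(X,Y)` of upper triangular matrices, with `X` having minimal
polynomial `∏ (t - λ_i)^{m_i}`, there are an invertible upper triangular `G` and a
partition `{E_1,…,E_r}` of the basis `{Ge_1,…,Ge_n}` such that
`ker (X - λ_i I)^{m_i} = span E_i` and each `span E_i` is stable under `X` and `Y`. -/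
theorem stmt11 {K : Type*} [Field K] [IsAlgClosed K] {n r : ℕ}
    (X Y : Matrix (Fin n) (Fin n) K)
    (hX : ∀ i j, j < i → X i j = 0) (hY : ∀ i j, j < i → Y i j = 0)
    (hcomm : X * Y = Y * X)
    (lam : Fin r → K) (hlam : Function.Injective lam)
    (m : Fin r → ℕ) (hm : ∀ i, 1 ≤ m i)
    (hmin : minpoly K X = ∏ i, (Polynomial.X - Polynomial.C (lam i)) ^ m i) :
    ∃ G : (Matrix (Fin n) (Fin n) K)ˣ,
      (∀ i j, j < i → (G : Matrix (Fin n) (Fin n) K) i j = 0) ∧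
      ∃ E : Fin r → Finset (Fin n),
        (∀ i j, i ≠ j → Disjoint (E i) (E j)) ∧
        (Finset.univ.biUnion E = Finset.univ) ∧
        ∀ i,
          Submodule.span K
              ((fun l => (G : Matrix (Fin n) (Fin n) K).mulVec (Pi.single l 1)) '' (E i)) =
            LinearMap.ker ((X - lam i • (1 : Matrix (Fin n) (Fin n) K)) ^ m i).mulVecLin ∧
          (∀ v ∈ Submodule.span K
              ((fun l => (G : Matrix (Fin n) (Fin n) K).mulVec (Pi.single l 1)) '' (E i)),
            X.mulVec v ∈ Submodule.span K
              ((fun l => (G : Matrix (Fin n) (Fin n) K).mulVec (Pi.single l 1)) '' (E i)) ∧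
            Y.mulVec v ∈ Submodule.span K
              ((fun l => (G : Matrix (Fin n) (Fin n) K).mulVec (Pi.single l 1)) '' (E i))) := by
  classical
  set f : Module.End K (Fin n → K) := Matrix.toLinAlgEquiv' X with hf
  set p : Fin r → K[X] := fun i => (Polynomial.X - Polynomial.C (lam i)) ^ m i with hp
  have haev : ∀ q : K[X], aeval f q = Matrix.toLinAlgEquiv' (aeval X q) := fun q =>
    aeval_algHom_apply (Matrix.toLinAlgEquiv' : Matrix (Fin n) (Fin n) K ≃ₐ[K] _) X q
  have hP0 : aeval f (∏ i, p i) = 0 := by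
    rw [haev, ← hmin, minpoly.aeval, map_zero]
  have hcop : Pairwise (Function.onFun IsCoprime p) := fun i j hij =>
    ((Polynomial.pairwise_coprime_X_sub_C hlam) hij).pow
  have hcopS : ((Finset.univ : Finset (Fin r)) : Set (Fin r)).Pairwise (Function.onFun IsCoprime p) :=
    hcop.set_pairwise _
  have hkerv : ∀ i (v : Fin n → K),
      ((X - lam i • (1 : Matrix (Fin n) (Fin n) K)) ^ m i).mulVecLin v = (aeval f (p i)) v := by
    intro i v
    have h1 : aeval X (p i) = (X - lam i • (1 : Matrix (Fin n) (Fin n) K)) ^ m i := by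
      rw [hp]
      simp only [map_pow, map_sub, aeval_X, aeval_C, Algebra.algebraMap_eq_smul_one]
    rw [haev, h1, Matrix.mulVecLin_apply, Matrix.toLinAlgEquiv'_apply]
  have hkerEq : ∀ i, LinearMap.ker ((X - lam i • (1 : Matrix (Fin n) (Fin n) K)) ^ m i).mulVecLin
      = LinearMap.ker (aeval f (p i)) := by
    intro i
    ext v
    rw [LinearMap.mem_ker, LinearMap.mem_ker, ← hkerv]
  set F : ℕ → Submodule K (Fin n → K) := fun s =>
    { carrier := {v | ∀ k : Fin n, s ≤ (k : ℕ) → v k = 0}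
      add_mem' := fun hv hw k hk => by
        simp only [Pi.add_apply, hv k hk, hw k hk, add_zero]
      zero_mem' := fun k _ => rfl
      smul_mem' := fun c v hv k hk => by
        simp only [Pi.smul_apply, hv k hk, smul_zero] } with hF
  have hFmem : ∀ s (v : Fin n → K), v ∈ F s ↔ ∀ k : Fin n, s ≤ (k : ℕ) → v k = 0 := by
    intro s v
    rw [hF]
    exact Iff.rfl
  have hFinv : ∀ s, ∀ v ∈ F s, f v ∈ F s := by
    intro s v hv
    rw [hFmem] at hv ⊢
    intro k hk
    rw [hf, Matrix.toLinAlgEquiv'_apply]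
    show (X *ᵥ v) k = 0
    rw [Matrix.mulVec, dotProduct]
    refine Finset.sum_eq_zero fun l _ => ?_
    by_cases hlk : l < k
    · rw [hX k l hlk, zero_mul]
    · rw [hv l (le_trans hk (not_lt.mp hlk)), mul_zero]
  have decompF : ∀ s, ∀ u ∈ F s, ∃ w : Fin r → (Fin n → K),
      (∀ i, w i ∈ F s) ∧ (∀ i, (aeval f (p i)) (w i) = 0) ∧ ∑ i, w i = u := by
    intro s u hu
    obtain ⟨w, hwc, hwk, -, hws⟩ := decomp_exists f Finset.univ p hcopS u
      (by rw [hP0]; rfl)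
    refine ⟨w, fun i => ?_, fun i => hwk i (Finset.mem_univ i), hws⟩
    obtain ⟨c, hc⟩ := hwc i
    rw [hc]
    exact aux_aeval_mem f (F s) (hFinv s) c u hu
  have uniq : ∀ v : Fin r → (Fin n → K), (∀ i, (aeval f (p i)) (v i) = 0) →
      ∑ i, v i = 0 → ∀ i, v i = 0 := by
    intro v hv hs i
    exact decomp_unique f Finset.univ p hcopS v (fun i _ => hv i) hs i (Finset.mem_univ i)
  -- pivot predicate
  have hPuniq : ∀ (j : Fin n) (i i' : Fin r)
      (v w : Fin n → K), (aeval f (p i)) v = 0 → v j ≠ 0 → (∀ k, j < k → v k = 0) →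
      (aeval f (p i')) w = 0 → w j ≠ 0 → (∀ k, j < k → w k = 0) → i = i' := by
    intro j i i' v w hv1 hv2 hv3 hw1 hw2 hw3
    by_contra hne
    set u : Fin n → K := w j • v - v j • w with hu
    have huF : u ∈ F (j : ℕ) := by
      rw [hFmem]
      intro k hk
      rcases eq_or_lt_of_le hk with h | h
      · have hkj : k = j := Fin.ext h.symm
        subst hkj
        simp [hu, mul_comm]
      · have hjk : j < k := h
        simp [hu, hv3 k hjk, hw3 k hjk]
    obtain ⟨z, hzF, hzk, hzs⟩ := decompF _ u huF
    set y : Fin r → (Fin n → K) := fun k =>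
      z k - (if k = i then w j • v else 0) + (if k = i' then v j • w else 0) with hy
    have hysum : ∑ k, y k = 0 := by
      rw [hy]
      simp only [Finset.sum_add_distrib, Finset.sum_sub_distrib,
        Finset.sum_ite_eq' Finset.univ, Finset.mem_univ, if_true]
      rw [hzs, hu]
      abel
    have hyk : ∀ k, (aeval f (p k)) (y k) = 0 := by
      intro k
      rw [hy]
      simp only [map_add, map_sub]
      rw [hzk k]
      have h1 : (aeval f (p k)) (if k = i then w j • v else 0) = 0 := by
        split
        · next h => subst h; rw [_root_.map_smul, hv1, smul_zero]
        · rw [map_zero]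
      have h2 : (aeval f (p k)) (if k = i' then v j • w else 0) = 0 := by
        split
        · next h => subst h; rw [_root_.map_smul, hw1, smul_zero]
        · rw [map_zero]
      rw [h1, h2]
      abel
    have hyi := uniq y hyk hysum i
    rw [hy] at hyi
    simp only [if_pos rfl, if_neg hne, add_zero] at hyi
    have hzi : z i = w j • v := sub_eq_zero.mp hyi
    have hzij : z i j = 0 := by
      have := hzF i
      rw [hFmem] at this
      exact this j le_rfl
    rw [hzi] at hzij
    simp only [Pi.smul_apply, smul_eq_mul] at hzij
    rcases mul_eq_zero.mp hzij with h | h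
    · exact hw2 h
    · exact hv2 h
  have hPcov : ∀ j : Fin n, ∃ i, ∃ v : Fin n → K,
      (aeval f (p i)) v = 0 ∧ v j ≠ 0 ∧ ∀ k, j < k → v k = 0 := by
    intro j
    have hsingle : (Pi.single j 1 : Fin n → K) ∈ F ((j : ℕ) + 1) := by
      rw [hFmem]
      intro k hk
      have hjk : j ≠ k := by
        intro h; subst h; omega
      rw [Pi.single_eq_of_ne (Ne.symm hjk)]
    obtain ⟨z, hzF, hzk, hzs⟩ := decompF _ _ hsingle
    have hone : ∑ i, z i j = 1 := by
      have := congrFun hzs j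
      simpa [Finset.sum_apply] using this
    have hex : ∃ i, z i j ≠ 0 := by
      by_contra hall
      push_neg at hall
      rw [Finset.sum_eq_zero (fun i _ => hall i)] at hone
      exact one_ne_zero hone.symm
    obtain ⟨i, hi⟩ := hex
    refine ⟨i, z i, hzk i, hi, fun k hk => ?_⟩
    have := hzF i
    rw [hFmem] at this
    exact this k (by omega)
  choose idx w hw1 hw2 hw3 using hPcov
  set col : Fin n → (Fin n → K) := fun j => (w j j)⁻¹ • w j with hcol
  have hcolk : ∀ j, (aeval f (p (idx j))) (col j) = 0 := by
    intro j; rw [hcol]; rw [LinearMap.map_smul, hw1, smul_zero]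
  have hcoldiag : ∀ j, col j j = 1 := by
    intro j; rw [hcol]; simp only [Pi.smul_apply, smul_eq_mul]
    exact inv_mul_cancel₀ (hw2 j)
  have hcolup : ∀ j k, j < k → col j k = 0 := by
    intro j k hk; rw [hcol]; simp [hw3 j k hk]
  set G : Matrix (Fin n) (Fin n) K := Matrix.of (fun k j => col j k) with hG
  have hGut : ∀ k j, j < k → G k j = 0 := fun k j hjk => hcolup j k hjk
  have hGdet : G.det = 1 := by
    rw [Matrix.det_of_upperTriangular (by intro a b hab; exact hGut a b hab)]
    exact Finset.prod_eq_one fun j _ => hcoldiag j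
  have hGunit : IsUnit G := by
    rw [Matrix.isUnit_iff_isUnit_det, hGdet]; exact isUnit_one
  have hGcoe : (hGunit.unit : Matrix (Fin n) (Fin n) K) = G := hGunit.unit_spec
  refine ⟨hGunit.unit, ?_, ?_⟩
  · intro a b hab
    rw [hGcoe]
    exact hGut a b hab
  have hcolG : ∀ l : Fin n,
      (hGunit.unit : Matrix (Fin n) (Fin n) K).mulVec (Pi.single l 1) = col l := by
    intro l
    rw [hGcoe]
    funext k
    simp [hG]
  set E : Fin r → Finset (Fin n) := fun i => Finset.univ.filter
    (fun j => ∃ v : Fin n → K, (aeval f (p i)) v = 0 ∧ v j ≠ 0 ∧ ∀ k, j < k → v k = 0) with hE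
  have hmemE : ∀ i j, j ∈ E i ↔
      ∃ v : Fin n → K, (aeval f (p i)) v = 0 ∧ v j ≠ 0 ∧ ∀ k, j < k → v k = 0 := by
    intro i j; rw [hE]; simp
  have hidxE : ∀ i j, j ∈ E i → idx j = i := by
    intro i j hj
    obtain ⟨v, h1, h2, h3⟩ := (hmemE i j).mp hj
    exact hPuniq j (idx j) i (w j) v (hw1 j) (hw2 j) (hw3 j) h1 h2 h3
  refine ⟨E, ?_, ?_, ?_⟩
  · intro i j hij
    rw [Finset.disjoint_left]
    intro a hai haj
    obtain ⟨v, h1, h2, h3⟩ := (hmemE i a).mp hai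
    obtain ⟨v', h1', h2', h3'⟩ := (hmemE j a).mp haj
    exact hij (hPuniq a i j v v' h1 h2 h3 h1' h2' h3')
  · apply Finset.eq_univ_of_forall
    intro j
    exact Finset.mem_biUnion.mpr
      ⟨idx j, Finset.mem_univ _, (hmemE (idx j) j).mpr ⟨w j, hw1 j, hw2 j, hw3 j⟩⟩
  intro i
  set S := Submodule.span K
      ((fun l => (hGunit.unit : Matrix (Fin n) (Fin n) K).mulVec (Pi.single l 1)) '' (E i))
    with hS
  have hSeq : S = Submodule.span K (col '' (E i)) := by
    rw [hS]
    congr 1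
    ext v
    constructor
    · rintro ⟨l, hl, rfl⟩; exact ⟨l, hl, (hcolG l).symm⟩
    · rintro ⟨l, hl, rfl⟩; exact ⟨l, hl, hcolG l⟩
  have hSle : S ≤ LinearMap.ker (aeval f (p i)) := by
    rw [hSeq, Submodule.span_le]
    rintro v ⟨l, hl, rfl⟩
    rw [SetLike.mem_coe, LinearMap.mem_ker, ← hidxE i l hl]
    exact hcolk l
  have hkle : ∀ s : ℕ, ∀ v : Fin n → K, (aeval f (p i)) v = 0 →
      (∀ k : Fin n, s ≤ (k : ℕ) → v k = 0) → v ∈ S := by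
    intro s
    induction s with
    | zero =>
      intro v hv hvF
      have : v = 0 := funext fun k => hvF k (Nat.zero_le _)
      rw [this]; exact S.zero_mem
    | succ s ih =>
      intro v hv hvF
      by_cases hsn : s < n
      · set j : Fin n := ⟨s, hsn⟩ with hj
        by_cases hvj : v j = 0
        · refine ih v hv ?_
          intro k hk
          rcases eq_or_lt_of_le hk with h | h
          · have hkj : k = j := Fin.ext h.symm
            rw [hkj]; exact hvj
          · exact hvF k h
        · have hjE : j ∈ E i := (hmemE i j).mpr ⟨v, hv, hvj, fun k hk => hvF k hk⟩
          have hcolS : col j ∈ S := by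
            rw [hSeq]
            exact Submodule.subset_span ⟨j, hjE, rfl⟩
          have hidxj : idx j = i := hidxE i j hjE
          have hv' : (aeval f (p i)) (v - v j • col j) = 0 := by
            rw [map_sub, _root_.map_smul, hv, ← hidxj, hcolk, smul_zero, sub_zero]
          have hv'F : ∀ k : Fin n, s ≤ (k : ℕ) → (v - v j • col j) k = 0 := by
            intro k hk
            rcases eq_or_lt_of_le hk with h | h
            · have hkj : k = j := Fin.ext h.symm
              rw [hkj]
              simp [hcoldiag j]
            · have hjk : j < k := h
              simp [hvF k h, hcolup j k hjk]
          have hmem := ih _ hv' hv'F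
          have hfin : v = (v - v j • col j) + v j • col j := by abel
          rw [hfin]
          exact S.add_mem hmem (S.smul_mem _ hcolS)
      · refine ih v hv ?_
        intro k hk
        exact absurd hk (by have := k.isLt; omega)
  have hkge : LinearMap.ker (aeval f (p i)) ≤ S := by
    intro v hv
    exact hkle n v (LinearMap.mem_ker.mp hv)
      (fun k hk => absurd hk (by have := k.isLt; omega))
  have hSker : S = LinearMap.ker (aeval f (p i)) := le_antisymm hSle hkge
  have hYf : Commute (Matrix.toLinAlgEquiv' Y : Module.End K (Fin n → K)) f := by
    show Matrix.toLinAlgEquiv' Y * f = f * Matrix.toLinAlgEquiv' Y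
    rw [hf, ← _root_.map_mul, ← _root_.map_mul, hcomm]
  constructor
  · rw [hkerEq i]
    exact hSker
  · intro v hv
    have hv0 : (aeval f (p i)) v = 0 := by
      rw [hSker] at hv
      exact LinearMap.mem_ker.mp hv
    constructor
    · rw [hSker, LinearMap.mem_ker]
      have hXv : X.mulVec v = f v := by rw [hf, Matrix.toLinAlgEquiv'_apply]
      rw [hXv]
      have := aux_commute f f (Commute.refl f) (p i)
      calc (aeval f (p i)) (f v) = ((aeval f (p i)) * f) v := rfl
        _ = (f * (aeval f (p i))) v := by rw [this.symm.eq]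
        _ = f ((aeval f (p i)) v) := rfl
        _ = 0 := by rw [hv0, map_zero]
    · rw [hSker, LinearMap.mem_ker]
      have hYv : Y.mulVec v = Matrix.toLinAlgEquiv' Y v := by
        rw [Matrix.toLinAlgEquiv'_apply]
      rw [hYv]
      have := aux_commute f (Matrix.toLinAlgEquiv' Y) hYf (p i)
      calc (aeval f (p i)) (Matrix.toLinAlgEquiv' Y v)
          = ((aeval f (p i)) * Matrix.toLinAlgEquiv' Y) v := rfl
        _ = (Matrix.toLinAlgEquiv' Y * (aeval f (p i))) v := by rw [this.symm.eq]
        _ = Matrix.toLinAlgEquiv' Y ((aeval f (p i)) v) := rfl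
        _ = 0 := by rw [hv0, map_zero]
end

section
/- If in the orbit of a nonzero strictly upper triangular n×n matrix X under conjugation by invertible upper triangular matrices the (h,k) entry vanishes identically, then the (i,j) entries vanish identically on that orbit for all h ≤ i, j ≤ k. -/
open Matrix

section aux

variable {K : Type*} [Field K] {n : ℕ}

/-- The inverse of an upper triangular unit is upper triangular. -/
private lemma ginv_tri (G : (Matrix (Fin n) (Fin n) K)ˣ)
    (hG : ∀ i j, j < i → (G : Matrix (Fin n) (Fin n) K) i j = 0) :
    ∀ i j, j < i → (↑G⁻¹ : Matrix (Fin n) (Fin n) K) i j = 0 := by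
  have hbt : BlockTriangular (G : Matrix (Fin n) (Fin n) K) id := fun i j hij => hG i j hij
  haveI : Invertible (G : Matrix (Fin n) (Fin n) K) := G.invertible
  have hinv := blockTriangular_inv_of_blockTriangular hbt
  intro i j hij
  rw [Matrix.coe_units_inv G]
  exact hinv hij

/-- Conjugating a strictly upper triangular matrix by an upper triangular unit gives a
strictly upper triangular matrix. -/
private lemma conj_su (G : (Matrix (Fin n) (Fin n) K)ˣ)
    (hG : ∀ i j, j < i → (G : Matrix (Fin n) (Fin n) K) i j = 0)
    (X : Matrix (Fin n) (Fin n) K) (hX : ∀ i j, j ≤ i → X i j = 0) :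
    ∀ i j, j ≤ i →
      ((G : Matrix (Fin n) (Fin n) K) * X * (↑G⁻¹ : Matrix (Fin n) (Fin n) K)) i j = 0 := by
  intro i j hij
  have hGi := ginv_tri G hG
  rw [Matrix.mul_apply]
  refine Finset.sum_eq_zero fun b _ => ?_
  rcases le_or_gt b j with hb | hb
  · rw [Matrix.mul_apply, Finset.sum_eq_zero, zero_mul]
    intro a _
    rcases lt_or_ge a i with ha | ha
    · rw [hG i a ha, zero_mul]
    · rw [hX a b (hb.trans (hij.trans ha)), mul_zero]
  · rw [hGi b j hb, mul_zero]

/-- The transvection `1 + c E_{p q}` as a unit, for `p ≠ q`. -/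
private def tunit (p q : Fin n) (hpq : p ≠ q) (c : K) : (Matrix (Fin n) (Fin n) K)ˣ where
  val := 1 + Matrix.single p q c
  inv := 1 - Matrix.single p q c
  val_inv := by
    have h0 : Matrix.single p q c * Matrix.single p q c = 0 :=
      Matrix.single_mul_single_of_ne c p q p (Ne.symm hpq) c
    simp only [add_mul, mul_sub, sub_mul, mul_add, one_mul, mul_one, h0]
    abel
  inv_val := by
    have h0 : Matrix.single p q c * Matrix.single p q c = 0 :=
      Matrix.single_mul_single_of_ne c p q p (Ne.symm hpq) c
    simp only [add_mul, mul_sub, sub_mul, mul_add, one_mul, mul_one, h0]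
    abel

private lemma tunit_val (p q : Fin n) (hpq : p ≠ q) (c : K) :
    (tunit p q hpq c : Matrix (Fin n) (Fin n) K) = 1 + Matrix.single p q c := rfl

private lemma tunit_inv_val (p q : Fin n) (hpq : p ≠ q) (c : K) :
    (↑(tunit p q hpq c)⁻¹ : Matrix (Fin n) (Fin n) K) = 1 - Matrix.single p q c := rfl

private lemma tunit_tri (p q : Fin n) (hpq : p < q) (c : K) :
    ∀ i j, j < i → (tunit p q hpq.ne c : Matrix (Fin n) (Fin n) K) i j = 0 := by
  intro i j hij
  rw [tunit_val, Matrix.add_apply, Matrix.one_apply_ne (ne_of_gt hij),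
    Matrix.single_apply_of_ne, add_zero]
  rintro ⟨rfl, rfl⟩
  exact absurd hij (not_lt.mpr hpq.le)

/-- Entry `(a, q)` of the conjugate, for `a ≠ p`. -/
private lemma conj_entry_col (p q : Fin n) (hpq : p ≠ q) (c : K)
    (Y : Matrix (Fin n) (Fin n) K) (a : Fin n) (ha : a ≠ p) :
    ((tunit p q hpq c : Matrix (Fin n) (Fin n) K) * Y *
      (↑(tunit p q hpq c)⁻¹ : Matrix (Fin n) (Fin n) K)) a q = Y a q - Y a p * c := by
  rw [tunit_val, tunit_inv_val, add_mul, one_mul, mul_sub, mul_one]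
  simp only [Matrix.sub_apply, Matrix.add_apply, Matrix.add_mul]
  rw [Matrix.single_mul_apply_of_ne c p q a q ha,
    Matrix.mul_single_apply_same,
    Matrix.mul_single_apply_same,
    Matrix.single_mul_apply_of_ne c p q a p ha]
  ring

/-- Entry `(p, b)` of the conjugate, for `b ≠ q`. -/
private lemma conj_entry_row (p q : Fin n) (hpq : p ≠ q) (c : K)
    (Y : Matrix (Fin n) (Fin n) K) (b : Fin n) (hb : b ≠ q) :
    ((tunit p q hpq c : Matrix (Fin n) (Fin n) K) * Y *
      (↑(tunit p q hpq c)⁻¹ : Matrix (Fin n) (Fin n) K)) p b = Y p b + c * Y q b := by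
  rw [tunit_val, tunit_inv_val, add_mul, one_mul, mul_sub, mul_one]
  simp only [Matrix.sub_apply, Matrix.add_apply, Matrix.add_mul]
  rw [Matrix.single_mul_apply_same,
    Matrix.mul_single_apply_of_ne c p q p b hb,
    Matrix.mul_single_apply_of_ne c p q p b hb]
  ring

end aux

/-- If the `(h,k)` entry vanishes identically on the orbit of a nonzero strictly upper
triangular `X` under conjugation by invertible upper triangular matrices, then so do all
the `(i,j)` entries with `h ≤ i, j ≤ k`. -/
theorem stmt12 {K : Type*} [Field K] [IsAlgClosed K] {n : ℕ}
    (X : Matrix (Fin n) (Fin n) K)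
    (hX : ∀ i j, j ≤ i → X i j = 0) (hX0 : X ≠ 0)
    (h k : Fin n)
    (hvan : ∀ G : (Matrix (Fin n) (Fin n) K)ˣ,
      (∀ i j, j < i → (G : Matrix (Fin n) (Fin n) K) i j = 0) →
      ((G : Matrix (Fin n) (Fin n) K) * X * (↑G⁻¹ : Matrix (Fin n) (Fin n) K)) h k = 0) :
    ∀ G : (Matrix (Fin n) (Fin n) K)ˣ,
      (∀ i j, j < i → (G : Matrix (Fin n) (Fin n) K) i j = 0) →
      ∀ i j : Fin n, h ≤ i → i ≤ k → h ≤ j → j ≤ k →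
        ((G : Matrix (Fin n) (Fin n) K) * X * (↑G⁻¹ : Matrix (Fin n) (Fin n) K)) i j = 0 := by
  intro G hG i j hhi hik hhj hjk
  by_contra hne
  set Y := (G : Matrix (Fin n) (Fin n) K) * X * (↑G⁻¹ : Matrix (Fin n) (Fin n) K) with hY
  -- Y is strictly upper triangular, so i < j
  have hYsu : ∀ a b, b ≤ a → Y a b = 0 := conj_su G hG X hX
  have hij : i < j := by
    by_contra hle
    exact hne (hYsu i j (not_lt.mp hle))
  have hik' : i < k := lt_of_lt_of_le hij hjk
  -- Step 1: find a unit u₁ moving the nonzero entry to column k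
  have step1 : ∃ u₁ : (Matrix (Fin n) (Fin n) K)ˣ,
      (∀ a b, b < a → (u₁ : Matrix (Fin n) (Fin n) K) a b = 0) ∧
      ((u₁ : Matrix (Fin n) (Fin n) K) * Y * (↑u₁⁻¹ : Matrix (Fin n) (Fin n) K)) i k ≠ 0 := by
    rcases eq_or_lt_of_le hjk with hjk' | hjk'
    · refine ⟨1, fun a b hba => Matrix.one_apply_ne (ne_of_gt hba), ?_⟩
      simp only [Units.val_one, inv_one, Matrix.one_mul, Matrix.mul_one]
      exact hjk' ▸ hne
    · -- conjugate by tunit j k c with c chosen so the (i,k) entry becomes 1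
      set c : K := (Y i k - 1) / (Y i j) with hc
      refine ⟨tunit j k hjk'.ne c, tunit_tri j k hjk' c, ?_⟩
      rw [conj_entry_col j k hjk'.ne c Y i hij.ne]
      have h2 : Y i j * c = Y i k - 1 := by
        rw [hc, mul_comm, div_mul_cancel₀ _ hne]
      rw [h2]
      have h3 : Y i k - (Y i k - 1) = 1 := by ring
      rw [h3]
      exact one_ne_zero
  obtain ⟨u₁, hu₁tri, hZ⟩ := step1
  set Z := (u₁ : Matrix (Fin n) (Fin n) K) * Y * (↑u₁⁻¹ : Matrix (Fin n) (Fin n) K) with hZdef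
  -- Step 2: find a unit u₂ moving the nonzero entry to row h
  have step2 : ∃ u₂ : (Matrix (Fin n) (Fin n) K)ˣ,
      (∀ a b, b < a → (u₂ : Matrix (Fin n) (Fin n) K) a b = 0) ∧
      ((u₂ : Matrix (Fin n) (Fin n) K) * Z * (↑u₂⁻¹ : Matrix (Fin n) (Fin n) K)) h k ≠ 0 := by
    rcases eq_or_lt_of_le hhi with hhi' | hhi'
    · refine ⟨1, fun a b hba => Matrix.one_apply_ne (ne_of_gt hba), ?_⟩
      simp only [Units.val_one, inv_one, Matrix.one_mul, Matrix.mul_one]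
      exact hhi' ▸ hZ
    · set c : K := (1 - Z h k) / (Z i k) with hc
      refine ⟨tunit h i hhi'.ne c, tunit_tri h i hhi' c, ?_⟩
      rw [conj_entry_row h i hhi'.ne c Z k (ne_of_gt hik')]
      have h2 : c * Z i k = 1 - Z h k := by
        rw [hc, div_mul_cancel₀ _ hZ]
      rw [h2]
      have h3 : Z h k + (1 - Z h k) = 1 := by ring
      rw [h3]
      exact one_ne_zero
  obtain ⟨u₂, hu₂tri, hW⟩ := step2
  -- Assemble the contradiction
  apply hW
  have htri : ∀ a b, b < a → ((u₂ * u₁ * G : (Matrix (Fin n) (Fin n) K)ˣ) :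
      Matrix (Fin n) (Fin n) K) a b = 0 := by
    have h1 : BlockTriangular ((u₂ : Matrix (Fin n) (Fin n) K)) id :=
      fun a b hab => hu₂tri a b hab
    have h2 : BlockTriangular ((u₁ : Matrix (Fin n) (Fin n) K)) id :=
      fun a b hab => hu₁tri a b hab
    have h3 : BlockTriangular ((G : Matrix (Fin n) (Fin n) K)) id :=
      fun a b hab => hG a b hab
    have := (h1.mul h2).mul h3
    intro a b hab
    rw [Units.val_mul, Units.val_mul]
    exact this hab
  have := hvan (u₂ * u₁ * G) htri
  have heq2 : ((u₂ * u₁ * G : (Matrix (Fin n) (Fin n) K)ˣ) : Matrix (Fin n) (Fin n) K) * X *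
      (↑(u₂ * u₁ * G)⁻¹ : Matrix (Fin n) (Fin n) K)
      = (u₂ : Matrix (Fin n) (Fin n) K) * Z * (↑u₂⁻¹ : Matrix (Fin n) (Fin n) K) := by
    rw [hZdef, hY]
    simp only [_root_.mul_inv_rev, Units.val_mul, mul_assoc]
  rw [heq2] at this
  exact this
end

section
/- For any nonzero strictly upper triangular m×m matrix Z, there exists an invertible upper triangular matrix G such that the (1,m) entry of G Z G^{-1} is nonzero. -/
open Matrix

/-- For any nonzero strictly upper triangular `m × m` matrix `Z`, there is an invertible
upper triangular `G` with `(G Z G⁻¹)` having nonzero `(1,m)` entry. -/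
theorem stmt13 {K : Type*} [Field K] [IsAlgClosed K] {m : ℕ} (hm : 0 < m)
    (Z : Matrix (Fin m) (Fin m) K)
    (hZ : ∀ i j, j ≤ i → Z i j = 0) (hZ0 : Z ≠ 0) :
    ∃ G : (Matrix (Fin m) (Fin m) K)ˣ,
      (∀ i j, j < i → (G : Matrix (Fin m) (Fin m) K) i j = 0) ∧
      ((G : Matrix (Fin m) (Fin m) K) * Z * (↑G⁻¹ : Matrix (Fin m) (Fin m) K))
        ⟨0, hm⟩ ⟨m - 1, by omega⟩ ≠ 0 := by
  -- find a nonzero entry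
  obtain ⟨i, j, hij⟩ : ∃ i j, Z i j ≠ 0 := by
    by_contra h
    push_neg at h
    exact hZ0 (by ext a b; simp [h])
  have hilj : i < j := by
    by_contra h
    exact hij (hZ i j (le_of_not_gt h))
  have hm2 : 2 ≤ m := by
    have := i.2; have := j.2; have := (Fin.lt_def.mp hilj); omega
  set z : Fin m := ⟨0, hm⟩ with hz
  set l : Fin m := ⟨m - 1, by omega⟩ with hl
  have hjl : j ≤ l := by rw [Fin.le_def]; have := j.2; simp [hl]; omega
  have hzi : z ≤ i := by rw [Fin.le_def]; simp [hz]
  have hzline : z ≠ l := by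
    intro h; rw [Fin.ext_iff] at h; simp [hz, hl] at h; omega
  have hijne : i ≠ j := ne_of_lt hilj
  -- choose s
  set s : K := if i = z then 0 else (1 - Z z j) / Z i j with hs
  have ha : Z z j + s * Z i j ≠ 0 := by
    by_cases h : i = z
    · simp [hs, h]; rw [← h]; exact hij
    · rw [hs, if_neg h]; field_simp; simp
  set a : K := Z z j + s * Z i j with hadef
  set t : K := if j = l then 0 else (Z z l + s * Z i l - 1) / a with ht
  have hval : Z z l + s * Z i l - t * a ≠ 0 := by
    by_cases h : j = l
    · rw [ht, if_pos h, zero_mul, sub_zero, ← h]; exact ha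
    · rw [ht, if_neg h]; field_simp; simp
  set A : Matrix (Fin m) (Fin m) K := single z i s with hA
  set B : Matrix (Fin m) (Fin m) K := single j l t with hB
  have hAA : A * A = 0 := by
    by_cases h : i = z
    · simp [hA, hs, h]
    · rw [hA]; exact Matrix.single_mul_single_of_ne _ _ _ _ h _
  have hBB : B * B = 0 := by
    by_cases h : j = l
    · simp [hB, ht, h]
    · rw [hB]; exact Matrix.single_mul_single_of_ne _ _ _ _ (fun hh => h hh.symm) _
  have hAB : A * B = 0 := by
    rw [hA, hB]; exact Matrix.single_mul_single_of_ne _ _ _ _ hijne _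
  have hBA : B * A = 0 := by
    rw [hA, hB]; exact Matrix.single_mul_single_of_ne _ _ _ _ (fun hh => hzline hh.symm) _
  have hBZ : B * Z = 0 := by
    ext p q
    by_cases h : p = j
    · subst h
      rw [hB, Matrix.single_mul_apply_same]
      rw [hZ l q (by rw [Fin.le_def]; have := q.2; simp [hl]; omega)]
      simp
    · rw [hB, Matrix.single_mul_apply_of_ne (h := h)]; simp
  have hZA : Z * A = 0 := by
    ext p q
    by_cases h : q = i
    · subst h
      rw [hA, Matrix.mul_single_apply_same]
      rw [hZ p z (by rw [Fin.le_def]; simp [hz])]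
      simp
    · rw [hA, Matrix.mul_single_apply_of_ne (hbj := h)]; simp
  -- the invertible matrix
  have key1 : (1 + A) * (1 - A) = 1 := by
    have : (1 + A) * (1 - A) = 1 - A * A := by noncomm_ring
    rw [this, hAA, sub_zero]
  have key1' : (1 - A) * (1 + A) = 1 := by
    have : (1 - A) * (1 + A) = 1 - A * A := by noncomm_ring
    rw [this, hAA, sub_zero]
  have key2 : (1 + B) * (1 - B) = 1 := by
    have : (1 + B) * (1 - B) = 1 - B * B := by noncomm_ring
    rw [this, hBB, sub_zero]
  have key2' : (1 - B) * (1 + B) = 1 := by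
    have : (1 - B) * (1 + B) = 1 - B * B := by noncomm_ring
    rw [this, hBB, sub_zero]
  refine ⟨⟨(1 + A) * (1 + B), (1 - B) * (1 - A), ?_, ?_⟩, ?_, ?_⟩
  · calc (1 + A) * (1 + B) * ((1 - B) * (1 - A))
        = (1 + A) * ((1 + B) * (1 - B)) * (1 - A) := by noncomm_ring
      _ = 1 := by rw [key2, mul_one, key1]
  · calc (1 - B) * (1 - A) * ((1 + A) * (1 + B))
        = (1 - B) * ((1 - A) * (1 + A)) * (1 + B) := by noncomm_ring
      _ = 1 := by rw [key1', mul_one, key2']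
  · -- upper triangular
    intro p q hpq
    show ((1 + A) * (1 + B)) p q = 0
    have triA : ∀ p q : Fin m, q < p → (1 + A) p q = 0 := by
      intro p q hpq
      simp only [Matrix.add_apply, Matrix.one_apply, hA]
      rw [if_neg (by intro h; subst h; exact lt_irrefl _ hpq)]
      rw [Matrix.single_apply_of_ne]
      · ring
      · rintro ⟨rfl, rfl⟩; exact absurd hpq (not_lt.mpr hzi)
    have triB : ∀ p q : Fin m, q < p → (1 + B) p q = 0 := by
      intro p q hpq
      simp only [Matrix.add_apply, Matrix.one_apply, hB]
      rw [if_neg (by intro h; subst h; exact lt_irrefl _ hpq)]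
      rw [Matrix.single_apply_of_ne]
      · ring
      · rintro ⟨rfl, rfl⟩; exact absurd hpq (not_lt.mpr hjl)
    rw [Matrix.mul_apply]
    apply Finset.sum_eq_zero
    intro k _
    by_cases hk : k < p
    · rw [triA p k hk, zero_mul]
    · rw [triB k q (lt_of_lt_of_le hpq (not_lt.mp hk)), mul_zero]
  · -- the entry is nonzero
    show ((1 + A) * (1 + B) * Z * ((1 - B) * (1 - A))) z l ≠ 0
    have hexp : (1 + A) * (1 + B) * Z * ((1 - B) * (1 - A))
        = Z + A * Z - Z * B - A * (Z * B) := by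
      have e1 : (1 + A) * (1 + B) = 1 + A + B := by
        rw [mul_add, mul_one, add_mul, one_mul, hAB, add_zero, add_assoc]
      have e2 : (1 + A + B) * Z = Z + A * Z := by
        rw [add_mul, add_mul, one_mul, hBZ, add_zero]
      have e3 : (1 - B) * (1 - A) = 1 - A - B := by
        rw [mul_sub, mul_one, sub_mul, one_mul, hBA, sub_zero, sub_sub, sub_sub, add_comm]
      rw [e1, e2, e3]
      rw [mul_sub, mul_sub, mul_one, add_mul, add_mul, mul_assoc, hZA, mul_zero,
        add_zero, mul_assoc]
      abel
    rw [hexp]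
    have eAZ : (A * Z) z l = s * Z i l := by
      rw [hA, Matrix.single_mul_apply_same]
    have eZB : (Z * B) z l = Z z j * t := by
      rw [hB, Matrix.mul_single_apply_same]
    have eAZB : (A * (Z * B)) z l = s * (Z i j * t) := by
      rw [hA, Matrix.single_mul_apply_same, hB, Matrix.mul_single_apply_same]
    simp only [Matrix.sub_apply, Matrix.add_apply, eAZ, eZB, eAZB]
    intro hcon
    apply hval
    rw [hadef]
    ring_nf
    ring_nf at hcon
    linear_combination hcon
end

section
/- For n = 3m, the set of pairs (X,Y) of strictly upper triangular n×n matrices that are block strictly upper triangular with respect to the partition of {1,...,3m} into three consecutive blocks of size m (i.e., the three diagonal blocks of size m vanish) and commute, has dimension at least 5m². Consequently, for m ≥ 10, CT_{3m} has an irreducible component of dimension exceeding (3m)(3m+3)/2, so CT_{3m} is not a complete intersection. -/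
open Matrix Polynomial

/-- Commuting pairs of strictly upper triangular `3m × 3m` matrices whose three
consecutive `m × m` diagonal blocks vanish (indices `i, j` in the same block iff
`⌊i/m⌋ = ⌊j/m⌋`). -/
def B3set (m : ℕ) (K : Type*) [CommRing K] : Set (Pt (3 * m) K) :=
  {x | x ∈ NTset (3 * m) K ∧
    ∀ i j : Fin (3 * m), (i : ℕ) / m = (j : ℕ) / m → Xof x i j = 0 ∧ Yof x i j = 0}

/- ======================================================================
   Auxiliary development
   ====================================================================== -/

namespace Stmt16Aux

open MvPolynomial TopologicalSpace Set Topology Order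

/-! ### Generalities on the Zariski topology of affine spaces -/

section Zar

variable {K : Type*} [Field K]

/-- Zariski topology on an affine space of functions. -/
def zarTop (K : Type*) [CommRing K] (σ : Type*) : TopologicalSpace (σ → K) :=
  TopologicalSpace.generateFrom
    { U | ∃ p : MvPolynomial σ K, U = {x | MvPolynomial.eval x p ≠ 0} }

lemma zar_basic_open {σ : Type*} (p : MvPolynomial σ K) :
    IsOpen[zarTop K σ] {x | MvPolynomial.eval x p ≠ 0} :=
  TopologicalSpace.GenerateOpen.basic _ ⟨p, rfl⟩

lemma zar_closed_eq {σ : Type*} (p : MvPolynomial σ K) (v : K) :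
    IsClosed[zarTop K σ] {x | MvPolynomial.eval x p = v} := by
  letI := zarTop K σ
  have h : {x : σ → K | MvPolynomial.eval x p = v}
      = {x : σ → K | MvPolynomial.eval x (p - MvPolynomial.C v) ≠ 0}ᶜ := by
    ext x; simp [sub_eq_zero]
  rw [h]
  exact (zar_basic_open _).isClosed_compl

lemma zar_open_mem {σ : Type*} {U : Set (σ → K)} (hU : IsOpen[zarTop K σ] U) :
    ∀ x ∈ U, ∃ p : MvPolynomial σ K, eval x p ≠ 0 ∧ ∀ y, eval y p ≠ 0 → y ∈ U := by
  induction hU with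
  | basic V hV =>
      obtain ⟨p, rfl⟩ := hV
      exact fun x hx => ⟨p, hx, fun y hy => hy⟩
  | univ => exact fun x _ => ⟨1, by simp, fun y _ => trivial⟩
  | inter U V hU hV ihU ihV =>
      intro x hx
      obtain ⟨p, hp, hpU⟩ := ihU x hx.1
      obtain ⟨q, hq, hqV⟩ := ihV x hx.2
      refine ⟨p * q, by simp [hp, hq], fun y hy => ?_⟩
      rw [_root_.map_mul] at hy
      exact ⟨hpU y (left_ne_zero_of_mul hy), hqV y (right_ne_zero_of_mul hy)⟩
  | sUnion S hS ih =>
      intro x hx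
      obtain ⟨V, hVS, hxV⟩ := hx
      obtain ⟨p, hp, h⟩ := ih V hVS x hxV
      exact ⟨p, hp, fun y hy => ⟨V, hVS, h y hy⟩⟩

lemma zar_preirr [Infinite K] {σ : Type*} :
    @IsPreirreducible (σ → K) (zarTop K σ) Set.univ := by
  letI := zarTop K σ
  rintro u v hu hv ⟨x, _, hxu⟩ ⟨y, _, hyv⟩
  obtain ⟨p, hp, hpu⟩ := zar_open_mem hu x hxu
  obtain ⟨q, hq, hqv⟩ := zar_open_mem hv y hyv
  have hp0 : p ≠ 0 := fun h => hp (by simp [h])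
  have hq0 : q ≠ 0 := fun h => hq (by simp [h])
  have hpq : p * q ≠ 0 := mul_ne_zero hp0 hq0
  have hex : ∃ z, eval z (p * q) ≠ 0 := by
    by_contra h
    push_neg at h
    exact hpq (MvPolynomial.funext fun z => by simpa using h z)
  obtain ⟨z, hz⟩ := hex
  rw [_root_.map_mul] at hz
  exact ⟨z, trivial, hpu z (left_ne_zero_of_mul hz), hqv z (right_ne_zero_of_mul hz)⟩

lemma eval_bind₁' {σ τ : Type*} (x : σ → K) (P : τ → MvPolynomial σ K)
    (q : MvPolynomial τ K) :
    eval x (bind₁ P q) = eval (fun j => eval x (P j)) q :=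
  eval₂Hom_bind₁ (RingHom.id K) x P q

lemma zar_continuous {σ τ : Type*} (P : τ → MvPolynomial σ K) :
    Continuous[zarTop K σ, zarTop K τ] (fun x j => MvPolynomial.eval x (P j)) := by
  rw [zarTop, zarTop, continuous_generateFrom_iff]
  rintro U ⟨q, rfl⟩
  have h : (fun (x : σ → K) (j : τ) => eval x (P j)) ⁻¹' {y | eval y q ≠ 0}
      = {x | eval x (bind₁ P q) ≠ 0} := by
    ext x
    simp [eval_bind₁']
  rw [h]
  exact zar_basic_open _

end Zar

/-! ### Chains of irreducible closed sets and Krull dimension -/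

lemma preimage_val_irr {X : Type*} [TopologicalSpace X] {S c : Set X}
    (hc : c ⊆ S) (h : IsIrreducible c) :
    IsIrreducible ((Subtype.val : S → X) ⁻¹' c) := by
  obtain ⟨⟨x, hx⟩, hpre⟩ := h
  refine ⟨⟨⟨x, hc hx⟩, hx⟩, ?_⟩
  rintro u v hu hv ⟨a, ha, hau⟩ ⟨b, hb, hbv⟩
  obtain ⟨u', hu', rfl⟩ := isOpen_induced_iff.mp hu
  obtain ⟨v', hv', rfl⟩ := isOpen_induced_iff.mp hv
  obtain ⟨z, hzc, hzu, hzv⟩ := hpre u' v' hu' hv' ⟨a.1, ha, hau⟩ ⟨b.1, hb, hbv⟩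
  exact ⟨⟨z, hc hzc⟩, hzc, hzu, hzv⟩

lemma dim_ge_chain {X : Type*} [TopologicalSpace X] {S : Set X} {N : ℕ}
    (c : ℕ → Set X) (hsub : ∀ i, i ≤ N → c i ⊆ S)
    (hcl : ∀ i, i ≤ N → IsClosed (c i)) (hirr : ∀ i, i ≤ N → IsIrreducible (c i))
    (hmono : ∀ i j, i ≤ j → j ≤ N → c i ⊆ c j)
    (hstrict : ∀ i, i < N → c i ≠ c (i + 1)) :
    (N : WithBot ℕ∞) ≤ topologicalKrullDim S := by
  classical
  have hne : ∀ i j : ℕ, i < j → j ≤ N → c i ≠ c j := by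
    intro i j hij hj heq
    refine hstrict i (lt_of_lt_of_le hij hj) ?_
    refine subset_antisymm (hmono i (i+1) (by omega) (by omega)) ?_
    rw [heq]
    exact hmono (i+1) j (by omega) hj
  let F : Fin (N + 1) → IrreducibleCloseds S := fun i =>
    ⟨(Subtype.val : S → X) ⁻¹' c i,
      preimage_val_irr (hsub i (by omega)) (hirr i (by omega)),
      (hcl i (by omega)).preimage continuous_subtype_val⟩
  have himg : ∀ i : ℕ, i ≤ N →
      (Subtype.val : S → X) '' ((Subtype.val : S → X) ⁻¹' c i) = c i := by
    intro i hi
    rw [Subtype.image_preimage_coe]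
    exact inter_eq_self_of_subset_right (hsub i hi)
  have hstep : ∀ i : Fin N, F i.castSucc < F i.succ := by
    intro i
    have h1 : F i.castSucc ≤ F i.succ :=
      SetLike.le_def.mpr fun x hx => hmono i (i+1) (by omega) (by exact i.2) hx
    refine lt_of_le_of_ne h1 ?_
    intro heq
    apply hne i (i+1) (by omega) i.2
    have h2 := congrArg (fun t : IrreducibleCloseds S => (Subtype.val : S → X) '' (t : Set S)) heq
    simpa [F, himg i (by omega), himg (i+1) (by exact i.2)] using h2
  let P : LTSeries (IrreducibleCloseds S) := ⟨N, F, hstep⟩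
  exact Order.LTSeries.length_le_krullDim P

/-! ### Block matrices -/

variable {R : Type*} [CommRing R] {m : ℕ}

/-- Assemble three `m × m` blocks into a block strictly upper triangular `3m × 3m` matrix. -/
def asm (P12 P13 P23 : Matrix (Fin m) (Fin m) R) :
    Matrix (Fin (3 * m)) (Fin (3 * m)) R :=
  Matrix.of fun i j =>
    if h : (i : ℕ) < m ∧ m ≤ (j : ℕ) ∧ (j : ℕ) < 2 * m then
      P12 ⟨i, h.1⟩ ⟨(j : ℕ) - m, by omega⟩
    else if h : (i : ℕ) < m ∧ 2 * m ≤ (j : ℕ) then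
      P13 ⟨i, h.1⟩ ⟨(j : ℕ) - 2 * m, by have := j.2; omega⟩
    else if h : m ≤ (i : ℕ) ∧ (i : ℕ) < 2 * m ∧ 2 * m ≤ (j : ℕ) then
      P23 ⟨(i : ℕ) - m, by omega⟩ ⟨(j : ℕ) - 2 * m, by have := j.2; omega⟩
    else 0

variable (P12 P13 P23 Q12 Q13 Q23 : Matrix (Fin m) (Fin m) R)

lemma asm_apply12 {i j : Fin (3 * m)} (h1 : (i : ℕ) < m) (h2 : m ≤ (j : ℕ))
    (h3 : (j : ℕ) < 2 * m) :
    asm P12 P13 P23 i j = P12 ⟨i, h1⟩ ⟨(j : ℕ) - m, by omega⟩ := by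
  simp only [asm, of_apply]
  rw [dif_pos ⟨h1, h2, h3⟩]

lemma asm_apply13 {i j : Fin (3 * m)} (h1 : (i : ℕ) < m) (h2 : 2 * m ≤ (j : ℕ)) :
    asm P12 P13 P23 i j = P13 ⟨i, h1⟩ ⟨(j : ℕ) - 2 * m, by have := j.2; omega⟩ := by
  simp only [asm, of_apply]
  rw [dif_neg (by omega), dif_pos ⟨h1, h2⟩]

lemma asm_apply23 {i j : Fin (3 * m)} (h1 : m ≤ (i : ℕ)) (h2 : (i : ℕ) < 2 * m)
    (h3 : 2 * m ≤ (j : ℕ)) :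
    asm P12 P13 P23 i j = P23 ⟨(i : ℕ) - m, by omega⟩ ⟨(j : ℕ) - 2 * m, by have := j.2; omega⟩ := by
  simp only [asm, of_apply]
  rw [dif_neg (by omega), dif_neg (by omega), dif_pos ⟨h1, h2, h3⟩]

lemma asm_zero {i j : Fin (3 * m)}
    (h1 : ¬((i : ℕ) < m ∧ m ≤ (j : ℕ) ∧ (j : ℕ) < 2 * m))
    (h2 : ¬((i : ℕ) < m ∧ 2 * m ≤ (j : ℕ)))
    (h3 : ¬(m ≤ (i : ℕ) ∧ (i : ℕ) < 2 * m ∧ 2 * m ≤ (j : ℕ))) :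
    asm P12 P13 P23 i j = 0 := by
  simp only [asm, of_apply]
  rw [dif_neg h1, dif_neg h2, dif_neg h3]

/-- Each nonzero block position forces block-row < block-column. -/
lemma asm_lower {i j : Fin (3 * m)}
    (h : (i : ℕ) / m = (j : ℕ) / m ∨ (j : ℕ) ≤ (i : ℕ)) :
    asm P12 P13 P23 i j = 0 := by
  have key : ¬ ((i : ℕ) / m < (j : ℕ) / m) := by
    rcases h with h | h
    · omega
    · exact fun hc => absurd (Nat.div_le_div_right (c := m) h) (by omega)
  refine asm_zero _ _ _ ?_ ?_ ?_
  · rintro ⟨a, b, c⟩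
    apply key
    have hm : 0 < m := by omega
    rw [Nat.div_eq_of_lt a]
    exact Nat.div_pos b hm
  · rintro ⟨a, b⟩
    apply key
    have hm : 0 < m := by omega
    rw [Nat.div_eq_of_lt a]
    exact Nat.div_pos (by omega) hm
  · rintro ⟨a, b, c⟩
    apply key
    have hm : 0 < m := by omega
    have hi : (i : ℕ) / m < 2 := (Nat.div_lt_iff_lt_mul hm).mpr (by omega)
    have hj : 2 ≤ (j : ℕ) / m := (Nat.le_div_iff_mul_le hm).mpr (by omega)
    omega

section Map
variable {S : Type*} [CommRing S]

lemma asm_map (f : R →+* S) :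
    (asm P12 P13 P23).map f = asm (P12.map f) (P13.map f) (P23.map f) := by
  ext i j
  simp only [asm, Matrix.map_apply, of_apply]
  split_ifs <;> simp

end Map

set_option linter.unreachableTactic false in
set_option linter.unusedTactic false in
lemma asm_mul :
    asm P12 P13 P23 * asm Q12 Q13 Q23 = asm 0 (P12 * Q23) 0 := by
  ext i j
  rw [Matrix.mul_apply]
  by_cases hij : (i : ℕ) < m ∧ 2 * m ≤ (j : ℕ)
  · have hR : asm 0 (P12 * Q23) 0 i j
        = (P12 * Q23) ⟨i, hij.1⟩ ⟨(j : ℕ) - 2 * m, by have := j.2; omega⟩ :=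
      asm_apply13 _ _ _ hij.1 hij.2
    rw [hR, Matrix.mul_apply]
    have key : ∀ k : Fin (3 * m), asm P12 P13 P23 i k * asm Q12 Q13 Q23 k j
        = if h : m ≤ (k : ℕ) ∧ (k : ℕ) < 2 * m then
            P12 ⟨i, hij.1⟩ ⟨(k : ℕ) - m, by omega⟩ *
            Q23 ⟨(k : ℕ) - m, by omega⟩ ⟨(j : ℕ) - 2 * m, by have := j.2; omega⟩
          else 0 := by
      intro k
      by_cases hk : m ≤ (k : ℕ) ∧ (k : ℕ) < 2 * m
      · rw [dif_pos hk, asm_apply12 _ _ _ hij.1 hk.1 hk.2, asm_apply23 _ _ _ hk.1 hk.2 hij.2]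
      · rw [dif_neg hk]
        rcases lt_or_ge (k : ℕ) m with h | h
        · rw [asm_zero _ _ _ (by omega) (by omega) (by omega), zero_mul]
        · have hk2 : 2 * m ≤ (k : ℕ) := by omega
          rw [asm_zero Q12 Q13 Q23 (by omega) (by omega) (by omega), mul_zero]
    rw [Finset.sum_congr rfl fun k _ => key k]
    set F : Fin (3 * m) → R := fun k =>
      if h : m ≤ (k : ℕ) ∧ (k : ℕ) < 2 * m then
          P12 ⟨i, hij.1⟩ ⟨(k : ℕ) - m, by omega⟩ *
          Q23 ⟨(k : ℕ) - m, by omega⟩ ⟨(j : ℕ) - 2 * m, by have := j.2; omega⟩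
        else 0 with hF
    set g : Fin m → Fin (3 * m) := fun p => ⟨m + ↑p, by have := p.2; omega⟩ with hg
    set T : Finset (Fin (3 * m)) := Finset.image g Finset.univ with hT
    have hzero : ∀ k ∈ (Finset.univ : Finset (Fin (3 * m))), k ∉ T → F k = 0 := by
      intro k _ hk
      rw [hF]
      refine dif_neg fun hc => hk ?_
      rw [hT]
      refine Finset.mem_image.mpr ⟨⟨(k : ℕ) - m, by omega⟩, Finset.mem_univ _, ?_⟩
      apply Fin.ext
      show m + ((k : ℕ) - m) = (k : ℕ)
      omega
    rw [← Finset.sum_subset (Finset.subset_univ T) hzero,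
      Finset.sum_image (fun a _ b _ hab => by
        have : m + (a : ℕ) = m + (b : ℕ) := congrArg Fin.val hab
        exact Fin.ext (by omega))]
    refine Finset.sum_congr rfl fun p _ => ?_
    rw [hF]
    beta_reduce
    have hc : m ≤ m + (p : ℕ) ∧ m + (p : ℕ) < 2 * m := by have := p.2; omega
    rw [dif_pos hc]
    congr 1
    · congr 1
      apply Fin.ext
      show m + (p : ℕ) - m = (p : ℕ)
      omega
    · congr 1
      apply Fin.ext
      show m + (p : ℕ) - m = (p : ℕ)
      omega
  · have hR : asm 0 (P12 * Q23) 0 i j = 0 := by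
      simp only [asm, of_apply]
      split_ifs <;>
        first
          | rfl
          | exact Matrix.zero_apply _ _
          | exact absurd ‹(i : ℕ) < m ∧ 2 * m ≤ (j : ℕ)› hij
    rw [hR]
    apply Finset.sum_eq_zero
    intro k _
    rcases lt_or_ge (k : ℕ) m with h | h
    · rw [asm_zero P12 P13 P23 (by omega) (by omega) (by omega), zero_mul]
    · rcases lt_or_ge (k : ℕ) (2 * m) with h' | h'
      · rcases lt_or_ge (j : ℕ) (2 * m) with hj | hj
        · rw [asm_zero Q12 Q13 Q23 (by omega) (by omega) (by omega), mul_zero]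
        · rw [asm_zero P12 P13 P23 (by omega) (by omega) (by omega), zero_mul]
      · rw [asm_zero Q12 Q13 Q23 (by omega) (by omega) (by omega), mul_zero]

/-- Embeddings of the three blocks of indices. -/
def em0 (p : Fin m) : Fin (3 * m) := ⟨(p : ℕ), by have := p.2; omega⟩
def em1 (p : Fin m) : Fin (3 * m) := ⟨m + (p : ℕ), by have := p.2; omega⟩
def em2 (p : Fin m) : Fin (3 * m) := ⟨2 * m + (p : ℕ), by have := p.2; omega⟩

lemma asm_em01 (p q : Fin m) : asm P12 P13 P23 (em0 p) (em1 q) = P12 p q := by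
  rw [asm_apply12 _ _ _ (show ((em0 p : Fin (3*m)) : ℕ) < m from p.2)
    (show m ≤ ((em1 q : Fin (3*m)) : ℕ) by show m ≤ m + (q:ℕ); omega)
    (show ((em1 q : Fin (3*m)) : ℕ) < 2*m by show m + (q:ℕ) < 2*m; have := q.2; omega)]
  exact congrArg₂ P12 (Fin.ext rfl) (Fin.ext (show m + (q:ℕ) - m = (q:ℕ) by omega))

lemma asm_em02 (p q : Fin m) : asm P12 P13 P23 (em0 p) (em2 q) = P13 p q := by
  rw [asm_apply13 _ _ _ (show ((em0 p : Fin (3*m)) : ℕ) < m from p.2)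
    (show 2*m ≤ ((em2 q : Fin (3*m)) : ℕ) by show 2*m ≤ 2*m + (q:ℕ); omega)]
  exact congrArg₂ P13 (Fin.ext rfl) (Fin.ext (show 2*m + (q:ℕ) - 2*m = (q:ℕ) by omega))

lemma asm_em12 (p q : Fin m) : asm P12 P13 P23 (em1 p) (em2 q) = P23 p q := by
  rw [asm_apply23 _ _ _ (show m ≤ ((em1 p : Fin (3*m)) : ℕ) by show m ≤ m + (p:ℕ); omega)
    (show ((em1 p : Fin (3*m)) : ℕ) < 2*m by show m + (p:ℕ) < 2*m; have := p.2; omega)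
    (show 2*m ≤ ((em2 q : Fin (3*m)) : ℕ) by show 2*m ≤ 2*m + (q:ℕ); omega)]
  exact congrArg₂ P23 (Fin.ext (show m + (p:ℕ) - m = (p:ℕ) by omega))
    (Fin.ext (show 2*m + (q:ℕ) - 2*m = (q:ℕ) by omega))

/-! ### The parametrization -/

abbrev Sig (m : ℕ) := Fin 5 × Fin m × Fin m

noncomputable instance sigTop (m : ℕ) (K : Type*) [CommRing K] :
    TopologicalSpace (Sig m → K) := zarTop K _

variable {K : Type*} [Field K]

/-- Blocks of a point of the parameter space, as matrices. -/
def matOf (e : Sig m → K) (t : Fin 5) : Matrix (Fin m) (Fin m) K :=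
  Matrix.of fun p q => e (t, p, q)

/-- The parametrization map: `X` has blocks `(1 + A₀, C, B)` and `Y` blocks
`((1 + A₀) * D, C', D * B)`, which commute by construction. -/
def phi (e : Sig m → K) : Pt (3 * m) K :=
  Sum.elim
    (fun ij => asm (1 + matOf e 4) (matOf e 1) (matOf e 3) ij.1 ij.2)
    (fun ij => asm ((1 + matOf e 4) * matOf e 0) (matOf e 2) (matOf e 0 * matOf e 3) ij.1 ij.2)

lemma Xof_phi (e : Sig m → K) :
    Xof (phi e) = asm (1 + matOf e 4) (matOf e 1) (matOf e 3) := rfl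

lemma Yof_phi (e : Sig m → K) :
    Yof (phi e) = asm ((1 + matOf e 4) * matOf e 0) (matOf e 2) (matOf e 0 * matOf e 3) := rfl

lemma phi_mem (e : Sig m → K) : phi e ∈ B3set m K := by
  refine ⟨⟨fun i j hji => ?_, fun i j hji => ?_, ?_⟩, fun i j hd => ⟨?_, ?_⟩⟩
  · rw [Xof_phi]; exact asm_lower _ _ _ (Or.inr hji)
  · rw [Yof_phi]; exact asm_lower _ _ _ (Or.inr hji)
  · rw [Xof_phi, Yof_phi, asm_mul, asm_mul, mul_assoc]
  · rw [Xof_phi]; exact asm_lower _ _ _ (Or.inl hd)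
  · rw [Yof_phi]; exact asm_lower _ _ _ (Or.inl hd)

/-- Polynomial version of the block matrices. -/
noncomputable def matP (t : Fin 5) : Matrix (Fin m) (Fin m) (MvPolynomial (Sig m) K) :=
  Matrix.of fun p q => MvPolynomial.X (t, p, q)

noncomputable def phiP : ((Fin (3 * m) × Fin (3 * m)) ⊕ (Fin (3 * m) × Fin (3 * m))) →
    MvPolynomial (Sig m) K :=
  Sum.elim
    (fun ij => asm (1 + matP 4) (matP 1) (matP 3) ij.1 ij.2)
    (fun ij => asm ((1 + matP 4) * matP 0) (matP 2) (matP 0 * matP 3) ij.1 ij.2)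

lemma matP_map (e : Sig m → K) (t : Fin 5) :
    (matP t).map (MvPolynomial.eval e) = matOf e t := by
  ext p q
  simp [matP, matOf]

lemma phi_eq (e : Sig m → K) : phi e = fun s => MvPolynomial.eval e (phiP s) := by
  classical
  funext s
  set f : MvPolynomial (Sig m) K →+* K := MvPolynomial.eval e with hf
  have hmm : ∀ M : Matrix (Fin m) (Fin m) (MvPolynomial (Sig m) K),
      M.map f = f.mapMatrix M := fun _ => rfl
  have hA : ((1 : Matrix (Fin m) (Fin m) (MvPolynomial (Sig m) K)) + matP 4).map f
      = 1 + matOf e 4 := by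
    rw [hmm, map_add, _root_.map_one, ← hmm, matP_map]
  have hAD : (((1 : Matrix (Fin m) (Fin m) (MvPolynomial (Sig m) K)) + matP 4) * matP 0).map f
      = (1 + matOf e 4) * matOf e 0 := by
    rw [hmm, _root_.map_mul, map_add, _root_.map_one, ← hmm, ← hmm, matP_map, matP_map]
  have hDB : ((matP 0 * matP 3 : Matrix (Fin m) (Fin m) (MvPolynomial (Sig m) K))).map f
      = matOf e 0 * matOf e 3 := by
    rw [hmm, _root_.map_mul, ← hmm, ← hmm, matP_map, matP_map]
  cases s with
  | inl ij =>
      show asm (1 + matOf e 4) (matOf e 1) (matOf e 3) ij.1 ij.2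
        = f (asm (1 + matP 4) (matP 1) (matP 3) ij.1 ij.2)
      have h : f (asm (1 + matP 4) (matP 1) (matP 3) ij.1 ij.2)
          = ((asm (1 + matP 4) (matP 1) (matP 3)).map f) ij.1 ij.2 := rfl
      rw [h, asm_map, hA, matP_map, matP_map]
  | inr ij =>
      show asm ((1 + matOf e 4) * matOf e 0) (matOf e 2) (matOf e 0 * matOf e 3) ij.1 ij.2
        = f (asm ((1 + matP 4) * matP 0) (matP 2) (matP 0 * matP 3) ij.1 ij.2)
      have h : f (asm ((1 + matP 4) * matP 0) (matP 2) (matP 0 * matP 3) ij.1 ij.2)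
          = ((asm ((1 + matP 4) * matP 0) (matP 2) (matP 0 * matP 3)).map f) ij.1 ij.2 := rfl
      rw [h, asm_map, hAD, matP_map, hDB]

lemma phi_continuous : Continuous (phi : (Sig m → K) → Pt (3 * m) K) := by
  have h : (phi : (Sig m → K) → Pt (3 * m) K) = fun e s => MvPolynomial.eval e (phiP s) :=
    funext phi_eq
  rw [h]
  exact zar_continuous phiP

/-! ### Closedness of `B3set` -/

lemma isClosed_B3set : IsClosed (B3set m K) := by
  classical
  set ι := (Fin (3 * m) × Fin (3 * m)) ⊕ (Fin (3 * m) × Fin (3 * m)) with hι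
  set 𝕏 : Matrix (Fin (3 * m)) (Fin (3 * m)) (MvPolynomial ι K) :=
    Matrix.of fun i j => MvPolynomial.X (Sum.inl (i, j)) with hX
  set 𝕐 : Matrix (Fin (3 * m)) (Fin (3 * m)) (MvPolynomial ι K) :=
    Matrix.of fun i j => MvPolynomial.X (Sum.inr (i, j)) with hY
  set PS : Set (MvPolynomial ι K) := {p | ∃ i j : Fin (3 * m),
      (j ≤ i ∧ (p = MvPolynomial.X (Sum.inl (i, j)) ∨ p = MvPolynomial.X (Sum.inr (i, j)))) ∨
      ((i : ℕ) / m = (j : ℕ) / m ∧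
        (p = MvPolynomial.X (Sum.inl (i, j)) ∨ p = MvPolynomial.X (Sum.inr (i, j)))) ∨
      p = (𝕏 * 𝕐 - 𝕐 * 𝕏) i j} with hPS
  have hmap : ∀ (x : Pt (3 * m) K) (i j : Fin (3 * m)),
      MvPolynomial.eval x ((𝕏 * 𝕐 - 𝕐 * 𝕏) i j)
        = (Xof x * Yof x - Yof x * Xof x) i j := by
    intro x i j
    set f : MvPolynomial ι K →+* K := MvPolynomial.eval x with hf
    have e1 : f.mapMatrix 𝕏 = Xof x := by ext a b; simp [hX, Xof, hf]
    have e2 : f.mapMatrix 𝕐 = Yof x := by ext a b; simp [hY, Yof, hf]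
    have h1 : f.mapMatrix (𝕏 * 𝕐 - 𝕐 * 𝕏) = Xof x * Yof x - Yof x * Xof x := by
      rw [map_sub, _root_.map_mul, _root_.map_mul, e1, e2]
    have h2 : MvPolynomial.eval x ((𝕏 * 𝕐 - 𝕐 * 𝕏) i j)
        = f.mapMatrix (𝕏 * 𝕐 - 𝕐 * 𝕏) i j := rfl
    rw [h2, h1]
  have hset : B3set m K = {x | ∀ p ∈ PS, MvPolynomial.eval x p = 0} := by
    ext x
    constructor
    · rintro ⟨⟨hX1, hY1, hc⟩, hb⟩ p ⟨i, j, hp⟩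
      rcases hp with ⟨hle, hp | hp⟩ | ⟨hd, hp | hp⟩ | hp <;> subst hp
      · rw [MvPolynomial.eval_X]; exact hX1 i j hle
      · rw [MvPolynomial.eval_X]; exact hY1 i j hle
      · rw [MvPolynomial.eval_X]; exact (hb i j hd).1
      · rw [MvPolynomial.eval_X]; exact (hb i j hd).2
      · rw [hmap, hc, sub_self, Matrix.zero_apply]
    · intro h
      refine ⟨⟨fun i j hle => ?_, fun i j hle => ?_, ?_⟩, fun i j hd => ⟨?_, ?_⟩⟩
      · have := h _ ⟨i, j, Or.inl ⟨hle, Or.inl rfl⟩⟩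
        rwa [MvPolynomial.eval_X] at this
      · have := h _ ⟨i, j, Or.inl ⟨hle, Or.inr rfl⟩⟩
        rwa [MvPolynomial.eval_X] at this
      · rw [← sub_eq_zero]
        ext i j
        have := h _ ⟨i, j, Or.inr (Or.inr rfl)⟩
        rw [hmap] at this
        simpa using this
      · have := h _ ⟨i, j, Or.inr (Or.inl ⟨hd, Or.inl rfl⟩)⟩
        rwa [MvPolynomial.eval_X] at this
      · have := h _ ⟨i, j, Or.inr (Or.inl ⟨hd, Or.inr rfl⟩)⟩
        rwa [MvPolynomial.eval_X] at this
  rw [hset]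
  have h2 : {x : Pt (3 * m) K | ∀ p ∈ PS, MvPolynomial.eval x p = 0}
      = ⋂ p ∈ PS, {x : Pt (3 * m) K | MvPolynomial.eval x p = 0} := by
    ext x; simp
  rw [h2]
  exact isClosed_biInter fun p _ => zar_closed_eq p 0

lemma phi_12 (e : Sig m → K) (p q : Fin m) :
    phi e (Sum.inl (em0 p, em1 q)) = (if p = q then 1 else 0) + e (4, p, q) := by
  show asm (1 + matOf e 4) (matOf e 1) (matOf e 3) (em0 p) (em1 q) = _
  rw [asm_em01, Matrix.add_apply, Matrix.one_apply]
  rfl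

lemma phi_13 (e : Sig m → K) (p q : Fin m) :
    phi e (Sum.inl (em0 p, em2 q)) = e (1, p, q) := by
  show asm (1 + matOf e 4) (matOf e 1) (matOf e 3) (em0 p) (em2 q) = _
  rw [asm_em02]; rfl

lemma phi_23 (e : Sig m → K) (p q : Fin m) :
    phi e (Sum.inl (em1 p, em2 q)) = e (3, p, q) := by
  show asm (1 + matOf e 4) (matOf e 1) (matOf e 3) (em1 p) (em2 q) = _
  rw [asm_em12]; rfl

lemma phi_Y13 (e : Sig m → K) (p q : Fin m) :
    phi e (Sum.inr (em0 p, em2 q)) = e (2, p, q) := by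
  show asm ((1 + matOf e 4) * matOf e 0) (matOf e 2) (matOf e 0 * matOf e 3) (em0 p) (em2 q) = _
  rw [asm_em02]; rfl

lemma phi_Y12 (e : Sig m → K) (p q : Fin m) :
    phi e (Sum.inr (em0 p, em1 q))
      = ∑ r : Fin m, ((if p = r then 1 else 0) + e (4, p, r)) * e (0, r, q) := by
  show asm ((1 + matOf e 4) * matOf e 0) (matOf e 2) (matOf e 0 * matOf e 3) (em0 p) (em1 q) = _
  rw [asm_em01, Matrix.mul_apply]
  refine Finset.sum_congr rfl fun r _ => ?_
  rw [Matrix.add_apply, Matrix.one_apply]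
  rfl

-- index bookkeeping
def idxS (s : Sig m) : ℕ := (s.1 : ℕ) * (m * m) + ((s.2.1 : ℕ) * m + (s.2.2 : ℕ))

def Lset (m : ℕ) (K : Type*) [Field K] (i : ℕ) : Set (Sig m → K) :=
  {e | ∀ s, ¬ idxS s < i → e s = 0}

lemma step_sep (i : ℕ) (hi : i < 5 * (m * m)) :
    ∃ (co : (Fin (3*m) × Fin (3*m)) ⊕ (Fin (3*m) × Fin (3*m))) (v : K) (w : Sig m → K),
      (∀ e ∈ Lset m K i, phi e co = v) ∧ w ∈ Lset m K (i+1) ∧ phi w co ≠ v := by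
  classical
  have hm : 0 < m := by
    rcases Nat.eq_zero_or_pos m with h | h
    · subst h; simp at hi
    · exact h
  obtain ⟨t, p, q, ht, hp, hq, hidx⟩ :
      ∃ t p q : ℕ, t < 5 ∧ p < m ∧ q < m ∧ t * (m*m) + (p * m + q) = i := by
    refine ⟨i / (m*m), (i % (m*m)) / m, (i % (m*m)) % m,
      (Nat.div_lt_iff_lt_mul (by positivity)).mpr (by omega),
      (Nat.div_lt_iff_lt_mul hm).mpr (Nat.mod_lt _ (by positivity)),
      Nat.mod_lt _ hm, ?_⟩
    have h1 : (i % (m*m)) / m * m + (i % (m*m)) % m = i % (m*m) := by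
      rw [mul_comm]
      exact Nat.div_add_mod _ m
    have h2 : i / (m*m) * (m*m) + i % (m*m) = i := by
      rw [mul_comm]
      exact Nat.div_add_mod i (m*m)
    rw [h1]
    exact h2
  set pF : Fin m := ⟨p, hp⟩ with hpF
  set qF : Fin m := ⟨q, hq⟩ with hqF
  have hpmq : p * m + q < m * m := by
    calc p * m + q < p * m + m := Nat.add_lt_add_left hq _
      _ = (p + 1) * m := by ring
      _ ≤ m * m := Nat.mul_le_mul_right m hp
  interval_cases t
  -- t = 0 : Y12 coordinate
  · refine ⟨Sum.inr (em0 pF, em1 qF), 0, fun s => if s = ((0 : Fin 5), pF, qF) then 1 else 0,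
      ?_, ?_, ?_⟩
    · intro e he
      rw [phi_Y12]
      have him : i = p * m + q := by omega
      have h4 : ∀ r : Fin m, e (4, pF, r) = 0 := by
        intro r
        refine he _ ?_
        show ¬ ((4:Fin 5) : ℕ) * (m*m) + ((pF : ℕ) * m + (r : ℕ)) < i
        have hv : ((4:Fin 5) : ℕ) = 4 := rfl
        rw [hv]
        refine Nat.not_lt.mpr ?_
        calc i ≤ m * m := by omega
          _ ≤ 4 * (m*m) := Nat.le_mul_of_pos_left _ (by norm_num)
          _ ≤ 4 * (m*m) + ((pF : ℕ) * m + (r : ℕ)) := Nat.le_add_right _ _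
      have h0 : e (0, pF, qF) = 0 := by
        refine he _ ?_
        show ¬ ((0:Fin 5) : ℕ) * (m*m) + ((pF : ℕ) * m + (qF : ℕ)) < i
        have hv : ((0:Fin 5) : ℕ) = 0 := rfl
        rw [hv]
        simp only [zero_mul, zero_add]
        show ¬ p * m + q < i
        omega
      have : ∀ r : Fin m, ((if pF = r then (1:K) else 0) + e (4, pF, r)) * e (0, r, qF)
          = if pF = r then e (0, r, qF) else 0 := by
        intro r
        rw [h4 r, add_zero]
        split_ifs <;> simp
      rw [Finset.sum_congr rfl fun r _ => this r]
      rw [Finset.sum_ite_eq]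
      simp [h0]
    · intro s hs
      dsimp only
      rw [if_neg]
      intro hE
      apply hs
      subst hE
      show ((0:Fin 5) : ℕ) * (m*m) + ((pF : ℕ) * m + (qF : ℕ)) < i + 1
      have hv : ((0:Fin 5) : ℕ) = 0 := rfl
      rw [hv]
      simp only [zero_mul, zero_add]
      show p * m + q < i + 1
      omega
    · rw [phi_Y12]
      have hterm : ∀ r : Fin m,
          ((if pF = r then (1:K) else 0) + (if ((4:Fin 5), pF, r) = ((0:Fin 5), pF, qF) then (1:K) else 0)) *
            (if ((0:Fin 5), r, qF) = ((0:Fin 5), pF, qF) then (1:K) else 0)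
          = if pF = r then 1 else 0 := by
        intro r
        have h45 : ((4:Fin 5), pF, r) ≠ ((0:Fin 5), pF, qF) := by
          intro h
          have h' : (4 : Fin 5) = 0 := congrArg Prod.fst h
          exact absurd h' (by decide)
        rw [if_neg h45, add_zero]
        have : (((0:Fin 5), r, qF) = ((0:Fin 5), pF, qF)) ↔ r = pF := by
          constructor
          · intro h
            exact (congrArg (fun z => z.2.1) h)
          · intro h; rw [h]
        by_cases hr : pF = r
        · rw [if_pos hr, if_pos (this.mpr hr.symm), one_mul]
        · rw [if_neg hr, zero_mul]
      rw [Finset.sum_congr rfl fun r _ => hterm r]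
      rw [Finset.sum_ite_eq]
      simp
  -- t = 1 : X13 coordinate
  · refine ⟨Sum.inl (em0 pF, em2 qF), 0, fun s => if s = ((1 : Fin 5), pF, qF) then 1 else 0,
      ?_, ?_, ?_⟩
    · intro e he
      rw [phi_13]
      refine he _ ?_
      show ¬ ((1:Fin 5) : ℕ) * (m*m) + ((pF : ℕ) * m + (qF : ℕ)) < i
      have hv : ((1:Fin 5) : ℕ) = 1 := rfl
      rw [hv]
      show ¬ 1 * (m*m) + (p * m + q) < i
      omega
    · intro s hs
      dsimp only
      rw [if_neg]
      intro hE
      apply hs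
      subst hE
      show ((1:Fin 5) : ℕ) * (m*m) + ((pF : ℕ) * m + (qF : ℕ)) < i + 1
      have hv : ((1:Fin 5) : ℕ) = 1 := rfl
      rw [hv]
      show 1 * (m*m) + (p * m + q) < i + 1
      omega
    · rw [phi_13]
      simp
  -- t = 2 : Y13 coordinate
  · refine ⟨Sum.inr (em0 pF, em2 qF), 0, fun s => if s = ((2 : Fin 5), pF, qF) then 1 else 0,
      ?_, ?_, ?_⟩
    · intro e he
      rw [phi_Y13]
      refine he _ ?_
      show ¬ ((2:Fin 5) : ℕ) * (m*m) + ((pF : ℕ) * m + (qF : ℕ)) < i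
      have hv : ((2:Fin 5) : ℕ) = 2 := rfl
      rw [hv]
      show ¬ 2 * (m*m) + (p * m + q) < i
      omega
    · intro s hs
      dsimp only
      rw [if_neg]
      intro hE
      apply hs
      subst hE
      show ((2:Fin 5) : ℕ) * (m*m) + ((pF : ℕ) * m + (qF : ℕ)) < i + 1
      have hv : ((2:Fin 5) : ℕ) = 2 := rfl
      rw [hv]
      show 2 * (m*m) + (p * m + q) < i + 1
      omega
    · rw [phi_Y13]
      simp
  -- t = 3 : X23 coordinate
  · refine ⟨Sum.inl (em1 pF, em2 qF), 0, fun s => if s = ((3 : Fin 5), pF, qF) then 1 else 0,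
      ?_, ?_, ?_⟩
    · intro e he
      rw [phi_23]
      refine he _ ?_
      show ¬ ((3:Fin 5) : ℕ) * (m*m) + ((pF : ℕ) * m + (qF : ℕ)) < i
      have hv : ((3:Fin 5) : ℕ) = 3 := rfl
      rw [hv]
      show ¬ 3 * (m*m) + (p * m + q) < i
      omega
    · intro s hs
      dsimp only
      rw [if_neg]
      intro hE
      apply hs
      subst hE
      show ((3:Fin 5) : ℕ) * (m*m) + ((pF : ℕ) * m + (qF : ℕ)) < i + 1
      have hv : ((3:Fin 5) : ℕ) = 3 := rfl
      rw [hv]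
      show 3 * (m*m) + (p * m + q) < i + 1
      omega
    · rw [phi_23]
      simp
  -- t = 4 : X12 coordinate
  · refine ⟨Sum.inl (em0 pF, em1 qF), (if pF = qF then (1:K) else 0),
      fun s => if s = ((4 : Fin 5), pF, qF) then 1 else 0, ?_, ?_, ?_⟩
    · intro e he
      rw [phi_12]
      have h0 : e (4, pF, qF) = 0 := by
        refine he _ ?_
        show ¬ ((4:Fin 5) : ℕ) * (m*m) + ((pF : ℕ) * m + (qF : ℕ)) < i
        have hv : ((4:Fin 5) : ℕ) = 4 := rfl
        rw [hv]
        show ¬ 4 * (m*m) + (p * m + q) < i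
        omega
      rw [h0, add_zero]
    · intro s hs
      dsimp only
      rw [if_neg]
      intro hE
      apply hs
      subst hE
      show ((4:Fin 5) : ℕ) * (m*m) + ((pF : ℕ) * m + (qF : ℕ)) < i + 1
      have hv : ((4:Fin 5) : ℕ) = 4 := rfl
      rw [hv]
      show 4 * (m*m) + (p * m + q) < i + 1
      omega
    · rw [phi_12]
      intro h
      have h1 : (if ((4:Fin 5), pF, qF) = ((4:Fin 5), pF, qF) then (1:K) else 0) = 1 := if_pos rfl
      rw [h1] at h
      exact one_ne_zero (left_eq_add.mp h.symm)


lemma trunc_continuous (i : ℕ) :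
    Continuous (fun (e : Sig m → K) (s : Sig m) => if idxS s < i then e s else 0) := by
  classical
  have h : (fun (e : Sig m → K) (s : Sig m) => if idxS s < i then e s else 0)
      = fun e s => MvPolynomial.eval e (if idxS s < i then MvPolynomial.X s else 0) := by
    funext e s
    split_ifs <;> simp
  rw [h]
  exact zar_continuous _

lemma Lset_mono {i j : ℕ} (h : i ≤ j) : Lset m K i ⊆ Lset m K j :=
  fun e he s hs => he s fun hlt => hs (lt_of_lt_of_le hlt h)

lemma Lset_eq_range (i : ℕ) :
    Lset m K i = Set.range (fun (e : Sig m → K) (s : Sig m) => if idxS s < i then e s else 0) := by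
  ext e
  constructor
  · intro he
    refine ⟨e, funext fun s => ?_⟩
    beta_reduce
    by_cases h : idxS s < i
    · rw [if_pos h]
    · rw [if_neg h, he s h]
  · rintro ⟨e', rfl⟩ s hs
    exact if_neg hs

/-! ### The chain of irreducible closed subsets -/

section Chain
variable (m K) [IsAlgClosed K]

noncomputable def cchain (i : ℕ) : Set (Pt (3 * m) K) := closure (phi '' Lset m K i)

variable {m K}

lemma cchain_sub (i : ℕ) : cchain m K i ⊆ B3set m K :=
  closure_minimal (by rintro _ ⟨e, _, rfl⟩; exact phi_mem e) isClosed_B3set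

lemma cchain_closed (i : ℕ) : IsClosed (cchain m K i) := isClosed_closure

lemma cchain_irr (i : ℕ) : IsIrreducible (cchain m K i) := by
  have h1 : phi '' Lset m K i
      = (phi ∘ fun (e : Sig m → K) (s : Sig m) => if idxS s < i then e s else 0) '' Set.univ := by
    rw [Set.image_univ, Set.range_comp, ← Lset_eq_range]
  apply IsIrreducible.closure
  rw [h1]
  have huniv : IsIrreducible (Set.univ : Set (Sig m → K)) :=
    ⟨Set.univ_nonempty, zar_preirr⟩
  exact huniv.image _ ((phi_continuous.comp (trunc_continuous i)).continuousOn)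

lemma cchain_mono {i j : ℕ} (h : i ≤ j) : cchain m K i ⊆ cchain m K j :=
  closure_mono (Set.image_mono (Lset_mono h))

lemma cchain_strict {i : ℕ} (hi : i < 5 * (m * m)) : cchain m K i ≠ cchain m K (i + 1) := by
  obtain ⟨co, v, w, hA, hw, hB⟩ := step_sep (K := K) i hi
  have hZ : IsClosed {x : Pt (3 * m) K | x co = v} := by
    have h : {x : Pt (3 * m) K | x co = v}
        = {x : Pt (3 * m) K | MvPolynomial.eval x (MvPolynomial.X co) = v} := by
      simp
    rw [h]
    exact zar_closed_eq _ v
  have h1 : cchain m K i ⊆ {x : Pt (3 * m) K | x co = v} :=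
    closure_minimal (by rintro _ ⟨e, he, rfl⟩; exact hA e he) hZ
  intro heq
  have h2 : phi w ∈ cchain m K (i + 1) := subset_closure ⟨w, hw, rfl⟩
  rw [← heq] at h2
  exact hB (h1 h2)

end Chain

lemma B3_sub_CT : B3set m K ⊆ CTset (3 * m) K := by
  rintro x ⟨⟨hX1, hY1, hc⟩, _⟩
  exact ⟨fun i j h => hX1 i j h.le, fun i j h => hY1 i j h.le, hc⟩

end Stmt16Aux

/-- The Vasconcelos example: the block variety has dimension at least `5m²`, hence for
`m ≥ 10` the variety `CT_{3m}` has an irreducible component of dimension exceeding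
`3m(3m+3)/2` and so is not a complete intersection. -/
theorem stmt16 (m : ℕ) (K : Type*) [Field K] [IsAlgClosed K] :
    ((5 * m ^ 2 : ℕ) : WithBot ℕ∞) ≤ topologicalKrullDim (B3set m K) ∧
    (10 ≤ m → ∃ C ∈ irreducibleComponents ↥(CTset (3 * m) K),
      ((3 * m * (3 * m + 3) / 2 : ℕ) : WithBot ℕ∞) < topologicalKrullDim C) := by
  classical
  open Stmt16Aux in
  constructor
  · have hdim := dim_ge_chain (S := B3set m K) (N := 5 * (m * m)) (cchain m K)
      (fun i _ => cchain_sub i) (fun i _ => cchain_closed i) (fun i _ => cchain_irr i)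
      (fun i j hij _ => cchain_mono hij) (fun i hi => cchain_strict hi)
    have h : (5 * m ^ 2 : ℕ) = 5 * (m * m) := by ring
    rw [h]
    exact hdim
  · intro h10
    open Stmt16Aux in
    let c' : ℕ → Set ↥(CTset (3 * m) K) := fun i => Subtype.val ⁻¹' cchain m K i
    have hsubCT : ∀ i, cchain m K i ⊆ CTset (3 * m) K := fun i => (cchain_sub i).trans B3_sub_CT
    have hirr' : ∀ i, IsIrreducible (c' i) := fun i => preimage_val_irr (hsubCT i) (cchain_irr i)
    obtain ⟨C, hCpre, hsubC, hmax⟩ := exists_preirreducible (c' (5 * (m * m))) (hirr' _).2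
    have hCirr : IsIrreducible C := ⟨(hirr' _).1.mono hsubC, hCpre⟩
    have hCmem : C ∈ irreducibleComponents ↥(CTset (3 * m) K) :=
      ⟨hCirr, fun t ht hCt => (hmax t ht.2 hCt).le⟩
    refine ⟨C, hCmem, ?_⟩
    have himg : ∀ k, Subtype.val '' (c' k) = cchain m K k := by
      intro k
      rw [Subtype.image_preimage_coe]
      exact Set.inter_eq_self_of_subset_right (hsubCT k)
    have hdim2 : ((5 * (m * m) : ℕ) : WithBot ℕ∞) ≤ topologicalKrullDim C := by
      refine dim_ge_chain (S := C) (N := 5 * (m * m)) c' ?_ ?_ ?_ ?_ ?_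
      · intro i hi
        exact (Set.preimage_mono (cchain_mono hi)).trans hsubC
      · intro i _
        exact (cchain_closed i).preimage continuous_subtype_val
      · intro i _
        exact hirr' i
      · intro i j hij _
        exact Set.preimage_mono (cchain_mono hij)
      · intro i hi hEq
        refine cchain_strict (m := m) (K := K) hi ?_
        rw [← himg i, ← himg (i + 1), hEq]
    refine lt_of_lt_of_le ?_ hdim2
    have harith : 3 * m * (3 * m + 3) / 2 < 5 * (m * m) := by
      have h2 : 3 * m * (3 * m + 3) < 5 * (m * m) * 2 := by nlinarith
      exact (Nat.div_lt_iff_lt_mul (by norm_num)).mpr h2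
    exact_mod_cast harith
end

section
/- The map γ_n sending a commuting pair (X,Y) of n×n matrices (not both rows of all 2×2 minors vanishing, i.e., (X,Y) ∉ 𝒞_0(n,K)) to the point of the Grassmannian G(2,K^{n²}) with Plücker coordinates p_{(i,j)(h,k)} = x_{i,j} y_{h,k} - y_{i,j} x_{h,k} is well defined, and its image satisfies the linear equations ∑_{k=1}^n p_{(i,k)(k,j)} = 0 for all i,j = 1,...,n. -/
open Matrix

/-- For a commuting pair `(X,Y)` not all of whose `2×2` minors
`p_{(i,j)(h,k)} = x_{i,j} y_{h,k} - y_{i,j} x_{h,k}` vanish, the map `γ_n` is well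
defined: the span of `X, Y` is a genuine 2-plane (a point of `G(2,K^{n²})` with the
minors as Plücker coordinates), and the image satisfies the linear equations
`∑_k p_{(i,k)(k,j)} = 0`. -/
theorem stmt18 {K : Type*} [Field K] [IsAlgClosed K] {n : ℕ}
    (X Y : Matrix (Fin n) (Fin n) K) (hcomm : X * Y = Y * X)
    (hC0 : ¬ ∀ i j h k : Fin n, X i j * Y h k - Y i j * X h k = 0) :
    Module.finrank K ↥(Submodule.span K {X, Y}) = 2 ∧
    ∀ i j : Fin n, ∑ k, (X i k * Y k j - Y i k * X k j) = 0 := by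
  constructor
  · push_neg at hC0
    obtain ⟨i, j, h, k, hm⟩ := hC0
    have hli : LinearIndependent K ![X, Y] := by
      rw [LinearIndependent.pair_iff]
      intro s t hst
      have hab : ∀ a b, s * X a b + t * Y a b = 0 := by
        intro a b
        have := congrFun (congrFun hst a) b
        simpa [Matrix.add_apply, Matrix.smul_apply, smul_eq_mul] using this
      by_contra hc
      rcases not_and_or.mp hc with hs | ht
      · apply hm
        have h1 := hab i j
        have h2 := hab h k
        have h0 : s * (X i j * Y h k - Y i j * X h k) = 0 := by
          linear_combination Y h k * h1 - Y i j * h2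
        exact (mul_eq_zero.mp h0).resolve_left hs
      · apply hm
        have h1 := hab i j
        have h2 := hab h k
        have h0 : t * (X i j * Y h k - Y i j * X h k) = 0 := by
          linear_combination X i j * h2 - X h k * h1
        exact (mul_eq_zero.mp h0).resolve_left ht
    have hr := finrank_span_eq_card hli
    have hrange : Set.range ![X, Y] = {X, Y} := by
      ext Z
      simp [Fin.exists_fin_two, Set.mem_insert_iff]
      tauto
    rw [hrange] at hr
    simpa using hr
  · intro i j
    have := congrFun (congrFun hcomm i) j
    simp only [Matrix.mul_apply] at this
    rw [Finset.sum_sub_distrib]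
    rw [sub_eq_zero]
    exact this
end
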